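/- arXiv:2309.14632 — 5 statements merged into one kernel-verified Lean document; each statement's English description precedes it below -/
import Mathlib

section
/- For any Hausdorff space X, |X| ≤ πχ(X)^(c(X)·nq(X)·wψ_c(X)). -/
open Cardinal Set TopologicalSpace

universe u

/-- The density of a space: the least cardinality of a dense subset. -/
noncomputable def dens (X : Type u) [TopologicalSpace X] : Cardinal.{u} :=
  sInf {c : Cardinal.{u} | ∃ D : Set X, Dense D ∧ #D = c}

/-- A local π-base at a point: a family of nonempty open sets such that every
open set containing the point contains a member of the family. -/
def IsLocalPiBase (X : Type u) [TopologicalSpace X] (x : X) (𝒱 : Set (Set X)) : Prop :=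
  (∀ V ∈ 𝒱, IsOpen V ∧ V.Nonempty) ∧
    ∀ U : Set X, IsOpen U → x ∈ U → ∃ V ∈ 𝒱, V ⊆ U

/-- The π-character at a point: the least infinite cardinality of a local π-base. -/
noncomputable def piCharPoint (X : Type u) [TopologicalSpace X] (x : X) : Cardinal.{u} :=
  sInf {κ : Cardinal.{u} | ℵ₀ ≤ κ ∧ ∃ 𝒱 : Set (Set X), IsLocalPiBase X x 𝒱 ∧ #𝒱 ≤ κ}

/-- The π-character of a space. -/
noncomputable def piChar (X : Type u) [TopologicalSpace X] : Cardinal.{u} :=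
  ⨆ x : X, piCharPoint X x

/-- A π-base for a space. -/
def IsPiBase (X : Type u) [TopologicalSpace X] (𝒱 : Set (Set X)) : Prop :=
  (∀ V ∈ 𝒱, IsOpen V ∧ V.Nonempty) ∧
    ∀ U : Set X, IsOpen U → U.Nonempty → ∃ V ∈ 𝒱, V ⊆ U

/-- The π-weight of a space: the least infinite cardinality of a π-base. -/
noncomputable def piWeight (X : Type u) [TopologicalSpace X] : Cardinal.{u} :=
  sInf {κ : Cardinal.{u} | ℵ₀ ≤ κ ∧ ∃ 𝒱 : Set (Set X), IsPiBase X 𝒱 ∧ #𝒱 ≤ κ}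

/-- The cellularity of a space: the least infinite cardinal bounding the size of
every pairwise disjoint family of nonempty open sets. -/
noncomputable def cellularity (X : Type u) [TopologicalSpace X] : Cardinal.{u} :=
  sInf {κ : Cardinal.{u} | ℵ₀ ≤ κ ∧ ∀ 𝒞 : Set (Set X),
    (∀ U ∈ 𝒞, IsOpen U ∧ U.Nonempty) → 𝒞.PairwiseDisjoint id → #𝒞 ≤ κ}

/-- The set of infinite cardinals κ witnessing the nonquasiregularity degree:
every nonempty open set U contains a nonempty set ⋂₀ 𝒱 with 𝒱 an open family of
size at most κ and ⋂_{V ∈ 𝒱} cl V ⊆ U. -/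
def nqSet (X : Type u) [TopologicalSpace X] : Set Cardinal.{u} :=
  {κ : Cardinal.{u} | ℵ₀ ≤ κ ∧ ∀ U : Set X, IsOpen U → U.Nonempty →
    ∃ 𝒱 : Set (Set X), (∀ V ∈ 𝒱, IsOpen V) ∧ #𝒱 ≤ κ ∧
      (⋂₀ 𝒱).Nonempty ∧ (⋂ V ∈ 𝒱, closure V) ⊆ U}

/-- A space is an nq-space if its nonquasiregularity degree is defined. -/
def IsNqSpace (X : Type u) [TopologicalSpace X] : Prop :=
  (nqSet X).Nonempty

/-- The nonquasiregularity degree of a space. -/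
noncomputable def nq (X : Type u) [TopologicalSpace X] : Cardinal.{u} :=
  sInf (nqSet X)

/-- The closed pseudocharacter at a point. -/
noncomputable def psiCPoint (X : Type u) [TopologicalSpace X] (x : X) : Cardinal.{u} :=
  sInf {κ : Cardinal.{u} | ℵ₀ ≤ κ ∧ ∃ 𝒱 : Set (Set X),
    (∀ V ∈ 𝒱, IsOpen V ∧ x ∈ V) ∧ #𝒱 ≤ κ ∧ (⋂ V ∈ 𝒱, closure V) = {x}}

/-- The closed pseudocharacter of a space. -/
noncomputable def psiC (X : Type u) [TopologicalSpace X] : Cardinal.{u} :=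
  sInf {κ : Cardinal.{u} | ℵ₀ ≤ κ ∧ ∀ x : X, ∃ 𝒱 : Set (Set X),
    (∀ V ∈ 𝒱, IsOpen V ∧ x ∈ V) ∧ #𝒱 ≤ κ ∧ (⋂ V ∈ 𝒱, closure V) = {x}}

/-- The dense closed pseudocharacter of a space. -/
noncomputable def dPsiC (X : Type u) [TopologicalSpace X] : Cardinal.{u} :=
  sInf {κ : Cardinal.{u} | ℵ₀ ≤ κ ∧ ∃ D : Set X, Dense D ∧ ∀ d ∈ D, psiCPoint X d ≤ κ}

/-- The weak closed pseudocharacter at a point: the least infinite cardinality of a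
family 𝒱 of open sets with ⋂_{V ∈ 𝒱} cl V = {x}. -/
noncomputable def wPsiCPoint (X : Type u) [TopologicalSpace X] (x : X) : Cardinal.{u} :=
  sInf {κ : Cardinal.{u} | ℵ₀ ≤ κ ∧ ∃ 𝒱 : Set (Set X),
    (∀ V ∈ 𝒱, IsOpen V) ∧ #𝒱 ≤ κ ∧ (⋂ V ∈ 𝒱, closure V) = {x}}

/-- The weak closed pseudocharacter of a space. -/
noncomputable def wPsiC (X : Type u) [TopologicalSpace X] : Cardinal.{u} :=
  ⨆ x : X, wPsiCPoint X x

/-- The pseudocharacter of a space: the least infinite cardinal κ such that every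
point is the intersection of at most κ open sets. -/
noncomputable def psi (X : Type u) [TopologicalSpace X] : Cardinal.{u} :=
  sInf {κ : Cardinal.{u} | ℵ₀ ≤ κ ∧ ∀ x : X, ∃ 𝒱 : Set (Set X),
    (∀ V ∈ 𝒱, IsOpen V) ∧ #𝒱 ≤ κ ∧ ⋂₀ 𝒱 = {x}}

/-- The Lindelöf degree of a space. -/
noncomputable def lindelofDegree (X : Type u) [TopologicalSpace X] : Cardinal.{u} :=
  sInf {κ : Cardinal.{u} | ℵ₀ ≤ κ ∧ ∀ 𝒰 : Set (Set X), (∀ U ∈ 𝒰, IsOpen U) →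
    ⋃₀ 𝒰 = Set.univ → ∃ 𝒱 ⊆ 𝒰, #𝒱 ≤ κ ∧ ⋃₀ 𝒱 = Set.univ}

/-- The cardinality of the collection of regular open subsets of a space. -/
noncomputable def cardRO (X : Type u) [TopologicalSpace X] : Cardinal.{u} :=
  #{R : Set X | R = interior (closure R)}

/-- A space is quasiregular if every nonempty open set contains a nonempty open
set whose closure is contained in it. -/
def Quasiregular (X : Type u) [TopologicalSpace X] : Prop :=
  ∀ U : Set X, IsOpen U → U.Nonempty →
    ∃ V : Set X, IsOpen V ∧ V.Nonempty ∧ closure V ⊆ U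


/-! ### Auxiliary machinery for the proof of `stmt_12` -/

section Stmt12Aux

open Classical in
lemma aux_exists_range_eq {α K : Type u} (s : Set α) (hs : s.Nonempty)
    (h : #s ≤ #K) : ∃ e : K → α, Set.range e = s := by
  classical
  obtain ⟨f⟩ := (Cardinal.le_def _ _).mp h
  refine ⟨fun k => if hk : ∃ v : s, f v = k then (Classical.choose hk : s).1 else hs.choose, ?_⟩
  ext a
  constructor
  · rintro ⟨k, rfl⟩
    dsimp only
    split_ifs with hk
    · exact (Classical.choose hk).2
    · exact hs.choose_spec
  · intro ha
    refine ⟨f ⟨a, ha⟩, ?_⟩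
    have hk : ∃ v : s, f v = f ⟨a, ha⟩ := ⟨⟨a, ha⟩, rfl⟩
    dsimp only
    rw [dif_pos hk]
    have h2 := f.injective (Classical.choose_spec hk)
    rw [h2]

lemma aux_exists_maximal_disjoint {X : Type u} (Sig0 : Set (Set X)) :
    ∃ 𝒜 : Set (Set X), 𝒜 ⊆ Sig0 ∧ 𝒜.PairwiseDisjoint id ∧
      ∀ P ∈ Sig0, P.Nonempty → (∀ A ∈ 𝒜, Disjoint P A) → P ∈ 𝒜 := by
  have hz : ∀ c ⊆ {𝒜 : Set (Set X) | 𝒜 ⊆ Sig0 ∧ 𝒜.PairwiseDisjoint id},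
      IsChain (· ⊆ ·) c → ∃ ub ∈ {𝒜 : Set (Set X) | 𝒜 ⊆ Sig0 ∧ 𝒜.PairwiseDisjoint id},
        ∀ s ∈ c, s ⊆ ub := by
    intro c hc hchain
    refine ⟨⋃₀ c, ⟨fun x hx => ?_, fun a ha b hb hab => ?_⟩, fun s hs => subset_sUnion_of_mem hs⟩
    · obtain ⟨t, htc, hxt⟩ := hx
      exact (hc htc).1 hxt
    · obtain ⟨sa, hsac, hasa⟩ := ha
      obtain ⟨sb, hsbc, hbsb⟩ := hb
      rcases hchain.total hsac hsbc with hsub | hsub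
      · exact (hc hsbc).2 (hsub hasa) hbsb hab
      · exact (hc hsac).2 hasa (hsub hbsb) hab
  obtain ⟨m, hm⟩ := zorn_subset {𝒜 : Set (Set X) | 𝒜 ⊆ Sig0 ∧ 𝒜.PairwiseDisjoint id} hz
  refine ⟨m, hm.1.1, hm.1.2, fun P hP hPne hdisj => ?_⟩
  have hins : insert P m ∈ {𝒜 : Set (Set X) | 𝒜 ⊆ Sig0 ∧ 𝒜.PairwiseDisjoint id} :=
    ⟨insert_subset hP hm.1.1, hm.1.2.insert fun A hA _ => hdisj A hA⟩
  have h2 := hm.eq_of_subset hins (subset_insert _ _)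
  exact h2 ▸ mem_insert _ _

noncomputable def iterChain {X : Type u} {J : Type u} [LinearOrder J] [WellFoundedLT J]
    (step : Set X → Set X) : J → Set X :=
  (IsWellFounded.wf (r := ((· < ·) : J → J → Prop))).fix
    (fun j rec => step (⋃ i : {i : J // i < j}, rec i.1 i.2))

lemma iterChain_eq {X : Type u} {J : Type u} [LinearOrder J] [WellFoundedLT J]
    (step : Set X → Set X) (j : J) :
    iterChain step j = step (⋃ i : {i : J // i < j}, iterChain step i.1) :=
  WellFounded.fix_eq _ _ _

lemma iterChain_mono {X : Type u} {J : Type u} [LinearOrder J] [WellFoundedLT J]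
    {step : Set X → Set X} (hstep : ∀ A, A ⊆ step A) {i j : J} (hij : i ≤ j) :
    iterChain step i ⊆ iterChain step j := by
  rcases eq_or_lt_of_le hij with rfl | hlt
  · exact subset_rfl
  · rw [iterChain_eq step j]
    exact (subset_iUnion (fun i : {i : J // i < j} => iterChain step i.1) ⟨i, hlt⟩).trans
      (hstep _)

lemma iterChain_card {X : Type u} {J : Type u} [LinearOrder J] [WellFoundedLT J]
    {step : Set X → Set X} {κ G : Cardinal.{u}} (hκG : κ ≤ G) (hGinf : ℵ₀ ≤ G)
    (hstepcard : ∀ A : Set X, #A ≤ G → #(step A) ≤ G)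
    (hIio : ∀ j : J, #{i : J // i < j} ≤ κ) (j : J) :
    #(iterChain step j) ≤ G := by
  induction j using WellFoundedLT.induction with
  | ind j IH =>
    rw [iterChain_eq step j]
    apply hstepcard
    refine le_trans (mk_iUnion_le _) ?_
    refine le_trans (mul_le_mul' (hIio j) (ciSup_le' fun i => IH i.1 i.2)) ?_
    calc κ * G ≤ G * G := mul_le_mul' hκG le_rfl
    _ = G := mul_eq_self hGinf

lemma aux_not_isMax (κ : Cardinal.{u}) : ¬ IsMax κ :=
  fun h => (Cardinal.cantor κ).not_ge (h (Cardinal.cantor κ).le)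

lemma aux_nonempty_toType {κ : Cardinal.{u}} (hκ : ℵ₀ ≤ κ) :
    Nonempty (Order.succ κ).ord.ToType := by
  rw [Ordinal.toType_nonempty_iff_ne_zero, ne_eq, Cardinal.ord_eq_zero]
  intro h
  have h1 : κ < Order.succ κ := Order.lt_succ_of_not_isMax (aux_not_isMax κ)
  rw [h] at h1
  exact (Cardinal.aleph0_pos.trans_le hκ).not_gt h1

lemma aux_bounded {κ : Cardinal.{u}} (hκ : ℵ₀ ≤ κ) {ι : Type u}
    (g : ι → (Order.succ κ).ord.ToType) (hι : #ι ≤ κ) :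
    ∃ jstar, ∀ i, g i ≤ jstar := by
  have hne : Nonempty (Order.succ κ).ord.ToType := aux_nonempty_toType hκ
  by_contra hcon
  push_neg at hcon
  have huniv : (univ : Set ((Order.succ κ).ord.ToType)) ⊆ ⋃ i, Iio (g i) := by
    intro j _
    obtain ⟨i, hi⟩ := hcon j
    exact mem_iUnion.mpr ⟨i, hi⟩
  have h1 : Order.succ κ ≤ #ι * ⨆ i, #(Iio (g i)) := by
    calc Order.succ κ = #((Order.succ κ).ord.ToType) := (Cardinal.mk_ord_toType _).symm
    _ = #(univ : Set ((Order.succ κ).ord.ToType)) := mk_univ.symm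
    _ ≤ #(⋃ i, Iio (g i)) := Cardinal.mk_le_mk_of_subset huniv
    _ ≤ _ := mk_iUnion_le _
  have h2 : #ι * ⨆ i, #(Iio (g i)) ≤ κ * κ :=
    mul_le_mul' hι (ciSup_le' fun i => Order.lt_succ_iff.mp (Cardinal.mk_Iio_ord_toType (g i)))
  have h3 : Order.succ κ ≤ κ := h1.trans (h2.trans_eq (mul_eq_self hκ))
  exact (Order.lt_succ_of_not_isMax (aux_not_isMax κ)).not_ge h3

lemma aux_G_inf {p κ : Cardinal.{u}} (hκ : ℵ₀ ≤ κ) (hp : ℵ₀ ≤ p) : ℵ₀ ≤ p ^ κ :=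
  hp.trans (by
    calc p = p ^ (1 : Cardinal) := (power_one p).symm
    _ ≤ p ^ κ := power_le_power_left
        (fun h => by rw [h] at hp; exact (Cardinal.aleph0_pos).not_ge hp)
        (le_trans (le_of_lt Cardinal.one_lt_aleph0) hκ))

lemma aux_κ_le_G {p κ : Cardinal.{u}} (hp2 : (2 : Cardinal) ≤ p) : κ ≤ p ^ κ :=
  le_trans (Cardinal.cantor κ).le (power_le_power_right hp2)

lemma aux_exists_gt {κ : Cardinal.{u}} (hκ : ℵ₀ ≤ κ) (j : (Order.succ κ).ord.ToType) :
    ∃ j', j < j' := by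
  by_contra hcon
  push_neg at hcon
  have huniv : (univ : Set ((Order.succ κ).ord.ToType)) ⊆ insert j (Iio j) := by
    intro x _
    rcases lt_or_eq_of_le (hcon x) with h' | h'
    · exact mem_insert_of_mem _ h'
    · exact h' ▸ mem_insert _ _
  have h1 : Order.succ κ ≤ κ := by
    calc Order.succ κ = #((Order.succ κ).ord.ToType) := (Cardinal.mk_ord_toType _).symm
    _ = #(univ : Set ((Order.succ κ).ord.ToType)) := mk_univ.symm
    _ ≤ #(insert j (Iio j) : Set _) := Cardinal.mk_le_mk_of_subset huniv
    _ ≤ #(Iio j) + 1 := Cardinal.mk_insert_le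
    _ ≤ κ + 1 := add_le_add_left
        (Order.lt_succ_iff.mp (Cardinal.mk_Iio_ord_toType j)) 1
    _ = κ := Cardinal.add_one_eq hκ
  exact (Order.lt_succ_of_not_isMax (aux_not_isMax κ)).not_ge h1

end Stmt12Aux

section DenseConstruction

variable {X : Type u} [TopologicalSpace X] [Nonempty X]
variable (B : X → Set (Set X)) (κ : Cardinal.{u})

/-- The union of the local families over a set of points. -/
def piFam (A : Set X) : Set (Set X) := ⋃ x ∈ A, B x

/-- The "intersection of complements of closures" set attached to a doubly-indexed family. -/
def EEset (F : κ.ord.ToType → κ.ord.ToType → Set X) : Set X :=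
  ⋂ i, (closure (⋃ j, F i j))ᶜ

open Classical in
/-- A choice of point of `EEset κ F` when nonempty. -/
noncomputable def ptF (F : κ.ord.ToType → κ.ord.ToType → Set X) : X :=
  if h : (EEset κ F).Nonempty then h.some else Classical.arbitrary X

lemma ptF_mem {F : κ.ord.ToType → κ.ord.ToType → Set X} (h : (EEset κ F).Nonempty) :
    ptF κ F ∈ EEset κ F := by
  unfold ptF
  rw [dif_pos h]
  exact h.some_mem

/-- The families used in the closing-off construction. -/
def famSet (A : Set X) : Set (κ.ord.ToType → κ.ord.ToType → Set X) :=
  {F | ∀ i j, F i j ∈ insert (∅ : Set X) (piFam B A)}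

/-- One step of the closing-off construction. -/
noncomputable def stepF (A : Set X) : Set X :=
  insert (Classical.arbitrary X) (A ∪ ptF κ '' famSet B κ A)

lemma subset_stepF (A : Set X) : A ⊆ stepF B κ A :=
  fun _ hx => mem_insert_of_mem _ (mem_union_left _ hx)

lemma piFam_mono {A A' : Set X} (h : A ⊆ A') : piFam B A ⊆ piFam B A' :=
  biUnion_subset_biUnion_left h

lemma famSet_mono {A A' : Set X} (h : A ⊆ A') : famSet B κ A ⊆ famSet B κ A' :=
  fun _ hF i j => insert_subset_insert (piFam_mono B h) (hF i j)

/-- The transfinite iteration of `stepF`. -/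
noncomputable def iterF : (Order.succ κ).ord.ToType → Set X :=
  iterChain (stepF B κ)

/-- The candidate dense set. -/
noncomputable def SF : Set X := ⋃ j, iterF B κ j

lemma iterF_eq (j : (Order.succ κ).ord.ToType) :
    iterF B κ j = stepF B κ (⋃ i : {i : (Order.succ κ).ord.ToType // i < j}, iterF B κ i.1) :=
  iterChain_eq _ j

lemma iterF_mono {i j : (Order.succ κ).ord.ToType} (hij : i ≤ j) :
    iterF B κ i ⊆ iterF B κ j :=
  iterChain_mono (subset_stepF B κ) hij

lemma iterF_subset_SF (j : (Order.succ κ).ord.ToType) : iterF B κ j ⊆ SF B κ :=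
  subset_iUnion_of_subset j subset_rfl

section Cards

variable {p : Cardinal.{u}} (hκ : ℵ₀ ≤ κ) (hp : ℵ₀ ≤ p) (hBcard : ∀ x, #(B x) ≤ p)

include hκ hp hBcard

lemma card_piFam (A : Set X) : #(piFam B A) ≤ #A * p :=
  (mk_biUnion_le _ _).trans (mul_le_mul' le_rfl (ciSup_le' fun x => hBcard x))

lemma card_stepF (A : Set X) (hA : #A ≤ p ^ κ) : #(stepF B κ A) ≤ p ^ κ := by
  have hGinf : ℵ₀ ≤ p ^ κ := aux_G_inf hκ hp
  have hpG : p ≤ p ^ κ := by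
    calc p = p ^ (1 : Cardinal) := (power_one p).symm
    _ ≤ p ^ κ := power_le_power_left
        (fun h => by rw [h] at hp; exact (Cardinal.aleph0_pos).not_ge hp)
        (le_trans (le_of_lt Cardinal.one_lt_aleph0) hκ)
  have h1 : #(piFam B A) ≤ p ^ κ := by
    refine (card_piFam B κ hκ hp hBcard A).trans ?_
    calc #A * p ≤ (p ^ κ) * (p ^ κ) := mul_le_mul' hA hpG
    _ = p ^ κ := mul_eq_self hGinf
  have hK : #(κ.ord.ToType) = κ := Cardinal.mk_ord_toType κ
  have hβ : #(↥(insert (∅ : Set X) (piFam B A))) ≤ p ^ κ := by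
    refine Cardinal.mk_insert_le.trans ?_
    calc #(piFam B A) + 1 ≤ (p ^ κ) + 1 := add_le_add_left h1 1
    _ = p ^ κ := Cardinal.add_one_eq hGinf
  have h2 : #(famSet B κ A) ≤ p ^ κ := by
    have hemb : #(famSet B κ A) ≤
        #(κ.ord.ToType → κ.ord.ToType → ↥(insert (∅ : Set X) (piFam B A))) := by
      refine Cardinal.mk_le_of_injective
        (f := fun F => fun i j => (⟨F.1 i j, F.2 i j⟩ : ↥(insert (∅ : Set X) (piFam B A)))) ?_
      intro F F' hFF
      apply Subtype.ext
      funext i j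
      exact congrArg Subtype.val (congrFun (congrFun hFF i) j)
    have harrow : #(κ.ord.ToType → κ.ord.ToType → ↥(insert (∅ : Set X) (piFam B A)))
        = ((#(↥(insert (∅ : Set X) (piFam B A)))) ^ κ) ^ κ := by
      rw [← Cardinal.power_def, ← Cardinal.power_def, hK]
    refine hemb.trans (harrow.le.trans ?_)
    calc ((#(↥(insert (∅ : Set X) (piFam B A)))) ^ κ) ^ κ ≤ ((p ^ κ) ^ κ) ^ κ :=
      power_le_power_right (power_le_power_right hβ)
    _ = p ^ κ := by
      rw [← power_mul, ← power_mul, mul_eq_self hκ, mul_eq_self hκ]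
  calc #(stepF B κ A) ≤ #(A ∪ ptF κ '' famSet B κ A : Set X) + 1 := Cardinal.mk_insert_le
  _ ≤ (#A + #(ptF κ '' famSet B κ A : Set X)) + 1 :=
      add_le_add_left (Cardinal.mk_union_le _ _) 1
  _ ≤ ((p ^ κ) + (p ^ κ)) + 1 :=
      add_le_add_left (add_le_add hA (Cardinal.mk_image_le.trans h2)) 1
  _ = (p ^ κ) + 1 := by rw [Cardinal.add_eq_self hGinf]
  _ = p ^ κ := Cardinal.add_one_eq hGinf

lemma card_iterF (hp2 : (2 : Cardinal) ≤ p) (j : (Order.succ κ).ord.ToType) :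
    #(iterF B κ j) ≤ p ^ κ := by
  refine iterChain_card (aux_κ_le_G hp2) (aux_G_inf hκ hp)
    (fun A hA => card_stepF B κ hκ hp hBcard A hA) (fun j => ?_) j
  exact Order.lt_succ_iff.mp (Cardinal.mk_Iio_ord_toType j)

lemma card_SF (hp2 : (2 : Cardinal) ≤ p) : #(SF B κ) ≤ p ^ κ := by
  have hGinf : ℵ₀ ≤ p ^ κ := aux_G_inf hκ hp
  have hsucc : Order.succ κ ≤ p ^ κ :=
    Order.succ_le_of_lt ((Cardinal.cantor κ).trans_le (power_le_power_right hp2))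
  calc #(SF B κ) ≤ #((Order.succ κ).ord.ToType) * ⨆ j, #(iterF B κ j) := mk_iUnion_le _
  _ ≤ (p ^ κ) * (p ^ κ) := by
      refine mul_le_mul' ?_ (ciSup_le' fun j => card_iterF B κ hκ hp hBcard hp2 j)
      rw [Cardinal.mk_ord_toType]
      exact hsucc
  _ = p ^ κ := mul_eq_self hGinf

end Cards

end DenseConstruction

lemma exists_dense_of_small {X : Type u} [TopologicalSpace X] [Nonempty X]
    {κ p : Cardinal.{u}} (hκ : ℵ₀ ≤ κ) (hp : ℵ₀ ≤ p)
    (B : X → Set (Set X))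
    (hBopen : ∀ x, ∀ P ∈ B x, IsOpen P ∧ P.Nonempty)
    (hBbase : ∀ x, ∀ U : Set X, IsOpen U → x ∈ U → ∃ P ∈ B x, P ⊆ U)
    (hBcard : ∀ x, #(B x) ≤ p)
    (hcell : ∀ 𝒞 : Set (Set X), (∀ U ∈ 𝒞, IsOpen U ∧ U.Nonempty) →
      𝒞.PairwiseDisjoint id → #𝒞 ≤ κ)
    (hnq : ∀ U : Set X, IsOpen U → U.Nonempty → ∃ 𝒱 : Set (Set X),
      (∀ V ∈ 𝒱, IsOpen V) ∧ #𝒱 ≤ κ ∧ (⋂₀ 𝒱).Nonempty ∧ (⋂ V ∈ 𝒱, closure V) ⊆ U) :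
    ∃ S : Set X, Dense S ∧ #S ≤ p ^ κ := by
  classical
  have hp2 : (2 : Cardinal) ≤ p := le_trans (by exact_mod_cast (Cardinal.nat_lt_aleph0 2).le) hp
  refine ⟨SF B κ, ?_, card_SF B κ hκ hp hBcard hp2⟩
  have hJne : Nonempty (Order.succ κ).ord.ToType := aux_nonempty_toType hκ
  -- the base point is in `SF`
  have harb : Classical.arbitrary X ∈ SF B κ := by
    obtain ⟨j⟩ := hJne
    refine iterF_subset_SF B κ j ?_
    rw [iterF_eq]
    exact mem_insert _ _
  by_contra hnd
  have hUne : ((closure (SF B κ))ᶜ : Set X).Nonempty := by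
    rw [nonempty_compl]
    intro h
    exact hnd (dense_iff_closure_eq.mpr h)
  have hUopen : IsOpen ((closure (SF B κ))ᶜ) := isClosed_closure.isOpen_compl
  obtain ⟨𝒱, hVopen, hVcard, ⟨q, hq⟩, hVsub⟩ := hnq _ hUopen hUne
  rcases eq_empty_or_nonempty 𝒱 with hVemp | hVne
  · rw [hVemp] at hVsub
    simp only [mem_empty_iff_false, iInter_of_empty, iInter_univ] at hVsub
    exact (hVsub (mem_univ (Classical.arbitrary X))) (subset_closure harb)
  -- maximal disjoint families
  have hMD := fun (V : Set X) =>
    aux_exists_maximal_disjoint {P | P ∈ piFam B (SF B κ) ∧ P ⊆ (closure V)ᶜ}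
  choose 𝒜 h𝒜1 h𝒜2 h𝒜3 using hMD
  have hpiopen : ∀ P ∈ piFam B (SF B κ), IsOpen P ∧ P.Nonempty := by
    intro P hP
    obtain ⟨x, -, hPx⟩ := mem_iUnion₂.mp hP
    exact hBopen x P hPx
  have hcard𝒜 : ∀ V : Set X, #(𝒜 V) ≤ κ := fun V =>
    hcell _ (fun P hP => hpiopen P (h𝒜1 V hP).1) (h𝒜2 V)
  -- the key claim : the open set avoiding `closure V` and `closure (⋃₀ 𝒜 V)` misses `SF`
  have hclaim : ∀ V : Set X,
      (((closure V)ᶜ ∩ (closure (⋃₀ 𝒜 V))ᶜ) ∩ SF B κ : Set X) = ∅ := by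
    intro V
    rw [eq_empty_iff_forall_notMem]
    rintro s ⟨⟨hs1, hs2⟩, hsS⟩
    have hOopen : IsOpen ((closure V)ᶜ ∩ (closure (⋃₀ 𝒜 V))ᶜ : Set X) :=
      (isClosed_closure.isOpen_compl).inter (isClosed_closure.isOpen_compl)
    obtain ⟨P, hPB, hPO⟩ := hBbase s _ hOopen ⟨hs1, hs2⟩
    have hPpi : P ∈ piFam B (SF B κ) := mem_biUnion hsS hPB
    have hPm : P ∈ {P | P ∈ piFam B (SF B κ) ∧ P ⊆ (closure V)ᶜ} :=
      ⟨hPpi, hPO.trans inter_subset_left⟩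
    have hPne : P.Nonempty := (hBopen s P hPB).2
    have hdisj : ∀ A ∈ 𝒜 V, Disjoint P A := by
      intro A hA
      refine disjoint_left.mpr fun a haP haA => ?_
      exact (hPO haP).2 (subset_closure ⟨A, hA, haA⟩)
    have hPmem := h𝒜3 V P hPm hPne hdisj
    obtain ⟨a, ha⟩ := hPne
    exact (hPO ha).2 (subset_closure ⟨P, hPmem, ha⟩)
  -- each `V ∈ 𝒱` is disjoint from the closure of the union of its family
  have hVdisjcl : ∀ V ∈ 𝒱, (V ∩ closure (⋃₀ 𝒜 V) : Set X) = ∅ := by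
    intro V hV
    rw [eq_empty_iff_forall_notMem]
    rintro a ⟨haV, hacl⟩
    have hsub : ⋃₀ 𝒜 V ⊆ Vᶜ := by
      refine sUnion_subset fun A hA => (h𝒜1 V hA).2.trans ?_
      exact compl_subset_compl.mpr subset_closure
    have : closure (⋃₀ 𝒜 V) ⊆ Vᶜ :=
      closure_minimal hsub (hVopen V hV).isClosed_compl
    exact this hacl haV
  -- capture all the families at one stage of the iteration
  have hstage : ∀ P ∈ ⋃ V ∈ 𝒱, 𝒜 V, ∃ j : (Order.succ κ).ord.ToType,
      P ∈ piFam B (iterF B κ j) := by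
    intro P hP
    obtain ⟨V, hV, hPV⟩ := mem_iUnion₂.mp hP
    obtain ⟨x, hxS, hPx⟩ := mem_iUnion₂.mp (h𝒜1 V hPV).1
    obtain ⟨j, hj⟩ := mem_iUnion.mp hxS
    exact ⟨j, mem_biUnion hj hPx⟩
  have hTcard : #(⋃ V ∈ 𝒱, 𝒜 V : Set (Set X)) ≤ κ := by
    refine (mk_biUnion_le _ _).trans ?_
    refine le_trans (mul_le_mul' hVcard (ciSup_le' fun V => hcard𝒜 V.1)) ?_
    exact le_of_eq (mul_eq_self hκ)
  have hg := fun (P : ↥(⋃ V ∈ 𝒱, 𝒜 V)) => hstage P.1 P.2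
  choose g hgmem using hg
  obtain ⟨jstar, hjstar⟩ := aux_bounded hκ g hTcard
  have hTstage : ∀ P ∈ ⋃ V ∈ 𝒱, 𝒜 V, P ∈ piFam B (iterF B κ jstar) := by
    intro P hP
    exact piFam_mono B (iterF_mono B κ (hjstar ⟨P, hP⟩)) (hgmem ⟨P, hP⟩)
  obtain ⟨j', hjj'⟩ := aux_exists_gt hκ jstar
  -- enumerations
  have hKcard : #(κ.ord.ToType) = κ := Cardinal.mk_ord_toType κ
  obtain ⟨e, herange⟩ := aux_exists_range_eq (K := κ.ord.ToType) 𝒱 hVne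
    (hVcard.trans_eq hKcard.symm)
  have he : ∀ i, e i ∈ 𝒱 := fun i => herange ▸ mem_range_self i
  have hfex : ∀ V : Set X, ∃ f : κ.ord.ToType → Set X,
      Set.range f = insert (∅ : Set X) (𝒜 V) := by
    intro V
    refine aux_exists_range_eq _ ⟨∅, mem_insert _ _⟩ ?_
    refine le_trans Cardinal.mk_insert_le ?_
    rw [hKcard]
    calc #(𝒜 V) + 1 ≤ κ + 1 := add_le_add_left (hcard𝒜 V) 1
    _ = κ := Cardinal.add_one_eq hκ
  choose f hf using hfex
  have hUnion : ∀ V : Set X, (⋃ j, f V j) = ⋃₀ 𝒜 V := by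
    intro V
    rw [← sUnion_range, hf V, sUnion_insert, empty_union]
  -- the doubly-indexed family
  set F : κ.ord.ToType → κ.ord.ToType → Set X := fun i j => f (e i) j with hFdef
  have hEE : EEset κ F = ⋂ i, (closure (⋃₀ 𝒜 (e i)))ᶜ := by
    unfold EEset
    exact iInter_congr fun i => by rw [hUnion (e i)]
  have hqEE : q ∈ EEset κ F := by
    rw [hEE]
    refine mem_iInter.mpr fun i => ?_
    intro hqcl
    exact (eq_empty_iff_forall_notMem.mp (hVdisjcl (e i) (he i)) q) ⟨hq _ (he i), hqcl⟩
  have hEEne : (EEset κ F).Nonempty := ⟨q, hqEE⟩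
  -- `ptF κ F` belongs to `SF`
  have hFfam : F ∈ famSet B κ (iterF B κ jstar) := by
    intro i j
    have hmem : F i j ∈ insert (∅ : Set X) (𝒜 (e i)) := by
      rw [← hf (e i)]
      exact mem_range_self j
    rcases mem_insert_iff.mp hmem with h0 | hA
    · rw [h0]; exact mem_insert _ _
    · exact mem_insert_of_mem _ (hTstage _ (mem_biUnion (he i) hA))
  have hptS : ptF κ F ∈ SF B κ := by
    refine iterF_subset_SF B κ j' ?_
    rw [iterF_eq]
    refine mem_insert_of_mem _ (mem_union_right _ ?_)
    refine mem_image_of_mem _ ?_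
    refine famSet_mono B κ ?_ hFfam
    exact subset_iUnion_of_subset (⟨jstar, hjj'⟩ : {i : _ // i < j'}) subset_rfl
  -- `EEset κ F ⊆ (closure (SF B κ))ᶜ`
  have hEEsub : EEset κ F ⊆ (closure (SF B κ))ᶜ := by
    intro x hx
    by_cases hall : ∀ V ∈ 𝒱, x ∈ closure V
    · exact hVsub (mem_iInter₂.mpr hall)
    · push_neg at hall
      obtain ⟨V, hV, hxV⟩ := hall
      rw [← herange] at hV
      obtain ⟨i, rfl⟩ := hV
      have hxA : x ∉ closure (⋃₀ 𝒜 (e i)) := by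
        rw [hEE] at hx
        exact mem_iInter.mp hx i
      have hxO : x ∈ ((closure (e i))ᶜ ∩ (closure (⋃₀ 𝒜 (e i)))ᶜ : Set X) := ⟨hxV, hxA⟩
      have hOS : (((closure (e i))ᶜ ∩ (closure (⋃₀ 𝒜 (e i)))ᶜ) ∩ SF B κ : Set X) = ∅ :=
        hclaim (e i)
      have hOopen : IsOpen ((closure (e i))ᶜ ∩ (closure (⋃₀ 𝒜 (e i)))ᶜ : Set X) :=
        (isClosed_closure.isOpen_compl).inter (isClosed_closure.isOpen_compl)
      have hsub : SF B κ ⊆ ((closure (e i))ᶜ ∩ (closure (⋃₀ 𝒜 (e i)))ᶜ)ᶜ := by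
        intro y hy
        intro hymem
        exact (eq_empty_iff_forall_notMem.mp hOS y) ⟨hymem, hy⟩
      have hclsub : closure (SF B κ) ⊆ ((closure (e i))ᶜ ∩ (closure (⋃₀ 𝒜 (e i)))ᶜ)ᶜ :=
        closure_minimal hsub (hOopen.isClosed_compl)
      intro hxcl
      exact (hclsub hxcl) hxO
  exact (hEEsub (ptF_mem κ hEEne)) (subset_closure hptS)

lemma aux_card_le_of_piBase {X : Type u} [TopologicalSpace X]
    {κ w G : Cardinal.{u}} (hκ : ℵ₀ ≤ κ) (hGinf : ℵ₀ ≤ G) (hGκ : G ^ κ ≤ G)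
    (PP : Set (Set X)) (hPB : IsPiBase X PP) (hPcard : #PP ≤ G)
    (hcell : ∀ 𝒞 : Set (Set X), (∀ U ∈ 𝒞, IsOpen U ∧ U.Nonempty) →
      𝒞.PairwiseDisjoint id → #𝒞 ≤ κ)
    (hwpsi : ∀ x : X, ∃ 𝒱 : Set (Set X),
      (∀ V ∈ 𝒱, IsOpen V) ∧ #𝒱 ≤ w ∧ (⋂ V ∈ 𝒱, closure V) = {x}) :
    #X ≤ G ^ w := by
  classical
  choose 𝒱 hVopen hVcard hVint using hwpsi
  have hMD := fun (V : Set X) => aux_exists_maximal_disjoint {P | P ∈ PP ∧ P ⊆ V}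
  choose M hM1 hM2 hM3 using hMD
  have hMcl : ∀ V : Set X, IsOpen V → closure (⋃₀ M V) = closure V := by
    intro V hV
    apply subset_antisymm
    · exact closure_mono (sUnion_subset fun A hA => (hM1 V hA).2)
    · refine closure_minimal ?_ isClosed_closure
      intro y hy
      by_contra hy'
      obtain ⟨P, hPin, hPsub⟩ := hPB.2 (V ∩ (closure (⋃₀ M V))ᶜ)
        (hV.inter isClosed_closure.isOpen_compl) ⟨y, hy, hy'⟩
      have hPne : P.Nonempty := (hPB.1 P hPin).2
      have hPmem : P ∈ {P | P ∈ PP ∧ P ⊆ V} := ⟨hPin, hPsub.trans inter_subset_left⟩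
      have hdisj : ∀ A ∈ M V, Disjoint P A := fun A hA =>
        disjoint_left.mpr fun a haP haA => (hPsub haP).2 (subset_closure ⟨A, hA, haA⟩)
      have hPM := hM3 V P hPmem hPne hdisj
      obtain ⟨a, ha⟩ := hPne
      exact (hPsub ha).2 (subset_closure ⟨P, hPM, ha⟩)
  have hrecover : ∀ x : X, (⋂ A ∈ M '' 𝒱 x, closure (⋃₀ A)) = {x} := by
    intro x
    rw [biInter_image, ← hVint x]
    exact iInter₂_congr fun V hV => by rw [hMcl V (hVopen x V hV)]
  have hinj : Function.Injective (fun x : X => M '' 𝒱 x) := by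
    intro x y hxy
    dsimp only at hxy
    have h1 : ({x} : Set X) = {y} := by
      rw [← hrecover x, ← hrecover y, hxy]
    exact singleton_eq_singleton_iff.mp h1
  have hmemMM : ∀ x : X, M '' 𝒱 x ⊆ {𝒜 : Set (Set X) | 𝒜 ⊆ PP ∧ #𝒜 ≤ κ} := by
    rintro x A ⟨V, hV, rfl⟩
    exact ⟨fun P hP => (hM1 V hP).1,
      hcell _ (fun P hP => hPB.1 P (hM1 V hP).1) (hM2 V)⟩
  have hcardIm : ∀ x : X, #(M '' 𝒱 x) ≤ w := fun x => mk_image_le.trans (hVcard x)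
  have hX : #X ≤ #{T : Set (Set (Set X)) //
      T ⊆ {𝒜 : Set (Set X) | 𝒜 ⊆ PP ∧ #𝒜 ≤ κ} ∧ #T ≤ w} := by
    refine Cardinal.mk_le_of_injective
      (f := fun x => ⟨M '' 𝒱 x, hmemMM x, hcardIm x⟩) ?_
    intro x y hxy
    exact hinj (congrArg Subtype.val hxy)
  refine hX.trans ?_
  have hMM : #({𝒜 : Set (Set X) | 𝒜 ⊆ PP ∧ #𝒜 ≤ κ}) ≤ G := by
    refine le_trans (Cardinal.mk_bounded_subset_le PP κ) ?_
    exact le_trans (power_le_power_right (max_le hPcard hGinf)) hGκ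
  refine le_trans (Cardinal.mk_bounded_subset_le _ w) ?_
  exact power_le_power_right (max_le hMM hGinf)

set_option maxHeartbeats 1000000 in
/-- For any Hausdorff space `X`, `|X| ≤ πχ(X)^(c(X)·nq(X)·wψ_c(X))`. -/
theorem stmt_12 (X : Type u) [TopologicalSpace X] [T2Space X] :
    #X ≤ piChar X ^ (cellularity X * nq X * wPsiC X) := by
  classical
  rcases isEmpty_or_nonempty X with hX | hX
  · exact le_of_eq_of_le (Cardinal.mk_eq_zero X) (zero_le)
  -- basic facts about the cardinal invariants
  have hcmem : cellularity X ∈ {κ : Cardinal.{u} | ℵ₀ ≤ κ ∧ ∀ 𝒞 : Set (Set X),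
      (∀ U ∈ 𝒞, IsOpen U ∧ U.Nonempty) → 𝒞.PairwiseDisjoint id → #𝒞 ≤ κ} :=
    csInf_mem ⟨max ℵ₀ (2 ^ #X), le_max_left _ _, fun 𝒞 _ _ =>
      (Cardinal.mk_set_le 𝒞).trans (by rw [← Cardinal.mk_set]; exact le_max_right _ _)⟩
  obtain ⟨hcinf, hccell⟩ := hcmem
  have hT2 : ∀ x : X, (⋂ V ∈ {V : Set X | IsOpen V ∧ x ∈ V}, closure V) = {x} := by
    intro x
    apply subset_antisymm
    · intro y hy
      rw [mem_singleton_iff]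
      by_contra hne
      obtain ⟨u, v, hu, hv, hxu, hyv, huv⟩ := t2_separation (Ne.symm hne)
      have hyu : y ∈ closure u := mem_iInter₂.mp hy u ⟨hu, hxu⟩
      obtain ⟨z, hzv, hzu⟩ := mem_closure_iff.mp hyu v hv hyv
      exact (disjoint_left.mp huv hzu) hzv
    · intro y hy
      rw [mem_singleton_iff] at hy
      subst hy
      exact mem_iInter₂.mpr fun V hV => subset_closure hV.2
  have hfamcard : ∀ x : X, #({V : Set X | IsOpen V ∧ x ∈ V}) ≤ 2 ^ #X := fun x =>
    (Cardinal.mk_set_le _).trans_eq Cardinal.mk_set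
  have hnqmem : nq X ∈ nqSet X := by
    refine csInf_mem ⟨max ℵ₀ (2 ^ #X), le_max_left _ _, fun U hU hUne => ?_⟩
    obtain ⟨x, hx⟩ := hUne
    refine ⟨{V : Set X | IsOpen V ∧ x ∈ V}, fun V hV => hV.1,
      (hfamcard x).trans (le_max_right _ _), ⟨x, fun V hV => hV.2⟩, ?_⟩
    rw [hT2 x]
    exact singleton_subset_iff.mpr hx
  obtain ⟨hninf, hnnq⟩ := hnqmem
  have hwmem : ∀ x : X, wPsiCPoint X x ∈ {κ : Cardinal.{u} | ℵ₀ ≤ κ ∧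
      ∃ 𝒱 : Set (Set X), (∀ V ∈ 𝒱, IsOpen V) ∧ #𝒱 ≤ κ ∧ (⋂ V ∈ 𝒱, closure V) = {x}} :=
    fun x => csInf_mem ⟨max ℵ₀ (2 ^ #X), le_max_left _ _, {V : Set X | IsOpen V ∧ x ∈ V},
      fun V hV => hV.1, (hfamcard x).trans (le_max_right _ _), hT2 x⟩
  have hwle : ∀ x : X, wPsiCPoint X x ≤ wPsiC X := fun x =>
    le_ciSup (Cardinal.bddAbove_range _) x
  have hwinf : ℵ₀ ≤ wPsiC X := le_trans (hwmem (Classical.arbitrary X)).1 (hwle _)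
  have hwpsi : ∀ x : X, ∃ 𝒱 : Set (Set X),
      (∀ V ∈ 𝒱, IsOpen V) ∧ #𝒱 ≤ wPsiC X ∧ (⋂ V ∈ 𝒱, closure V) = {x} := by
    intro x
    obtain ⟨-, 𝒱, h1, h2, h3⟩ := hwmem x
    exact ⟨𝒱, h1, h2.trans (hwle x), h3⟩
  have hpmem : ∀ x : X, piCharPoint X x ∈ {κ : Cardinal.{u} | ℵ₀ ≤ κ ∧
      ∃ 𝒱 : Set (Set X), IsLocalPiBase X x 𝒱 ∧ #𝒱 ≤ κ} :=
    fun x => csInf_mem ⟨max ℵ₀ (2 ^ #X), le_max_left _ _,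
      {V : Set X | IsOpen V ∧ V.Nonempty},
      ⟨fun V hV => hV, fun U hU hxU => ⟨U, ⟨hU, ⟨x, hxU⟩⟩, subset_rfl⟩⟩,
      (Cardinal.mk_set_le _).trans_eq Cardinal.mk_set |>.trans (le_max_right _ _)⟩
  have hple : ∀ x : X, piCharPoint X x ≤ piChar X := fun x =>
    le_ciSup (Cardinal.bddAbove_range _) x
  have hpinf : ℵ₀ ≤ piChar X := le_trans (hpmem (Classical.arbitrary X)).1 (hple _)
  have hBex : ∀ x : X, ∃ 𝒱 : Set (Set X), IsLocalPiBase X x 𝒱 ∧ #𝒱 ≤ piChar X := by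
    intro x
    obtain ⟨-, 𝒱, h1, h2⟩ := hpmem x
    exact ⟨𝒱, h1, h2.trans (hple x)⟩
  choose B hBbase hBcard using hBex
  -- the exponent
  have hn0 : nq X ≠ 0 := fun h => by
    rw [h] at hninf; exact (Cardinal.aleph0_pos).not_ge hninf
  have hc0 : cellularity X ≠ 0 := fun h => by
    rw [h] at hcinf; exact (Cardinal.aleph0_pos).not_ge hcinf
  have hκinf : ℵ₀ ≤ cellularity X * nq X :=
    le_trans hcinf (Cardinal.le_mul_right hn0)
  have hcellκ : ∀ 𝒞 : Set (Set X), (∀ U ∈ 𝒞, IsOpen U ∧ U.Nonempty) →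
      𝒞.PairwiseDisjoint id → #𝒞 ≤ cellularity X * nq X := fun 𝒞 h1 h2 =>
    (hccell 𝒞 h1 h2).trans (Cardinal.le_mul_right hn0)
  have hnqκ : ∀ U : Set X, IsOpen U → U.Nonempty → ∃ 𝒱 : Set (Set X),
      (∀ V ∈ 𝒱, IsOpen V) ∧ #𝒱 ≤ cellularity X * nq X ∧ (⋂₀ 𝒱).Nonempty ∧
      (⋂ V ∈ 𝒱, closure V) ⊆ U := by
    intro U hU hUne
    obtain ⟨𝒱, h1, h2, h3, h4⟩ := hnnq U hU hUne
    exact ⟨𝒱, h1, h2.trans (Cardinal.le_mul_left hc0), h3, h4⟩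
  obtain ⟨S, hSdense, hScard⟩ := exists_dense_of_small hκinf hpinf B
    (fun x => (hBbase x).1) (fun x => (hBbase x).2) hBcard hcellκ hnqκ
  -- the π-base
  have hPB : IsPiBase X (⋃ x ∈ S, B x) := by
    constructor
    · intro P hP
      obtain ⟨x, -, hPx⟩ := mem_iUnion₂.mp hP
      exact (hBbase x).1 P hPx
    · intro U hU hUne
      obtain ⟨y, hyU, hyS⟩ := dense_iff_inter_open.mp hSdense U hU hUne
      obtain ⟨P, hP, hPU⟩ := (hBbase y).2 U hU hyU
      exact ⟨P, mem_biUnion hyS hP, hPU⟩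
  have hGinf : ℵ₀ ≤ piChar X ^ (cellularity X * nq X) := by
    refine hpinf.trans ?_
    calc piChar X = piChar X ^ (1 : Cardinal) := (Cardinal.power_one _).symm
    _ ≤ piChar X ^ (cellularity X * nq X) := Cardinal.power_le_power_left
        (fun h => by rw [h] at hpinf; exact (Cardinal.aleph0_pos).not_ge hpinf)
        (le_trans (le_of_lt Cardinal.one_lt_aleph0) hκinf)
  have hPcard : #(⋃ x ∈ S, B x : Set (Set X)) ≤ piChar X ^ (cellularity X * nq X) := by
    refine (mk_biUnion_le _ _).trans ?_
    have hp_le : piChar X ≤ piChar X ^ (cellularity X * nq X) := by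
      calc piChar X = piChar X ^ (1 : Cardinal) := (Cardinal.power_one _).symm
      _ ≤ piChar X ^ (cellularity X * nq X) := Cardinal.power_le_power_left
          (fun h => by rw [h] at hpinf; exact (Cardinal.aleph0_pos).not_ge hpinf)
          (le_trans (le_of_lt Cardinal.one_lt_aleph0) hκinf)
    calc #S * ⨆ x : S, #(B x.1)
        ≤ (piChar X ^ (cellularity X * nq X)) * (piChar X ^ (cellularity X * nq X)) :=
          mul_le_mul' hScard ((ciSup_le' fun (x : ↥S) => hBcard x.1).trans hp_le)
    _ = piChar X ^ (cellularity X * nq X) := mul_eq_self hGinf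
  have hGκ : (piChar X ^ (cellularity X * nq X)) ^ (cellularity X * nq X) ≤
      piChar X ^ (cellularity X * nq X) := by
    rw [← Cardinal.power_mul, mul_eq_self hκinf]
  have hfinal := aux_card_le_of_piBase hκinf hGinf hGκ (⋃ x ∈ S, B x) hPB hPcard
    hcellκ hwpsi
  calc #X ≤ (piChar X ^ (cellularity X * nq X)) ^ wPsiC X := hfinal
  _ = piChar X ^ (cellularity X * nq X * wPsiC X) := (Cardinal.power_mul).symm
end

section
/- If X is a Hausdorff space, then |X| ≤ πχ(X)^(c(X)·dψ_c(X)·wψ_c(X)). -/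
open Cardinal Set TopologicalSpace

universe u

set_option linter.unusedSectionVars false

namespace Stmt13Aux

variable {X : Type u} [TopologicalSpace X]

lemma not_mem_closure_of_open_disjoint {x : X} {V S : Set X}
    (hV : IsOpen V) (hx : x ∈ V) (h : V ∩ S = ∅) : x ∉ closure S := by
  intro hmem
  rcases (mem_closure_iff.1 hmem) V hV hx with ⟨y, hy⟩
  rw [h] at hy
  exact hy

/-- Cellular reduction: any open family has a `≤ κ` subfamily whose union is dense
in the union of the family. -/
lemma cell_red (κ : Cardinal.{u})
    (hcell : ∀ 𝒞 : Set (Set X), (∀ U ∈ 𝒞, IsOpen U ∧ U.Nonempty) →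
      𝒞.PairwiseDisjoint id → #𝒞 ≤ κ)
    (𝒰 : Set (Set X)) (h𝒰 : ∀ U ∈ 𝒰, IsOpen U) :
    ∃ 𝒲 : Set (Set X), 𝒲 ⊆ 𝒰 ∧ #𝒲 ≤ κ ∧ ⋃₀ 𝒰 ⊆ closure (⋃₀ 𝒲) := by
  classical
  set Fam : Set (Set (Set X)) :=
    {𝒞 | (∀ C ∈ 𝒞, IsOpen C ∧ C.Nonempty ∧ ∃ U ∈ 𝒰, C ⊆ U) ∧ 𝒞.PairwiseDisjoint id}
    with hFamdef
  obtain ⟨m, hm⟩ : ∃ m, Maximal (· ∈ Fam) m := by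
    apply zorn_subset
    intro c hc hchain
    refine ⟨⋃₀ c, ⟨?_, ?_⟩, fun s hs => subset_sUnion_of_mem hs⟩
    · rintro C ⟨s, hs, hC⟩
      exact (hc hs).1 C hC
    · rintro C₁ ⟨s₁, hs₁, hC₁⟩ C₂ ⟨s₂, hs₂, hC₂⟩ hne
      rcases hchain.total hs₁ hs₂ with h12 | h21
      · exact (hc hs₂).2 (h12 hC₁) hC₂ hne
      · exact (hc hs₁).2 hC₁ (h21 hC₂) hne
  have hmFam := hm.1
  have hmcard : #m ≤ κ :=
    hcell m (fun C hC => ⟨(hmFam.1 C hC).1, (hmFam.1 C hC).2.1⟩) hmFam.2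
  have hsel : ∀ C : m, ∃ U, U ∈ 𝒰 ∧ (C : Set X) ⊆ U := fun C => (hmFam.1 C C.2).2.2
  choose f hf1 hf2 using hsel
  refine ⟨range f, range_subset_iff.2 hf1, mk_range_le.trans hmcard, ?_⟩
  rintro x ⟨U₀, hU₀, hxU₀⟩
  by_contra hx
  set O : Set X := U₀ ∩ (closure (⋃₀ range f))ᶜ with hOdef
  have hOopen : IsOpen O := (h𝒰 U₀ hU₀).inter isClosed_closure.isOpen_compl
  have hxO : x ∈ O := ⟨hxU₀, hx⟩
  have hOsub : ∀ C ∈ m, O ∩ C = ∅ := by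
    intro C hC
    have h1 : C ⊆ closure (⋃₀ range f) := fun y hy =>
      subset_closure ⟨f ⟨C, hC⟩, ⟨⟨C, hC⟩, rfl⟩, hf2 ⟨C, hC⟩ hy⟩
    ext z
    simp only [mem_inter_iff, mem_empty_iff_false, iff_false, not_and]
    intro hzO hzC
    exact hzO.2 (h1 hzC)
  have hins : insert O m ∈ Fam := by
    constructor
    · intro C hC
      rcases hC with rfl | hC
      · exact ⟨hOopen, ⟨x, hxO⟩, U₀, hU₀, inter_subset_left⟩
      · exact hmFam.1 C hC
    · refine hmFam.2.insert fun C hC hne => ?_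
      exact Set.disjoint_iff_inter_eq_empty.2 (hOsub C hC)
  have hOm : O ∈ m := hm.2 hins (subset_insert O m) (mem_insert O m)
  have : x ∈ (∅ : Set X) := by
    rw [← hOsub O hOm]; exact ⟨hxO, hxO⟩
  exact this


/-- The pool of local π-base members spawned by points of `A`. -/
def Pl (B : X → Set (Set X)) (A : Set X) : Set (Set X) := ⋃ x ∈ A, B x

lemma Pl_mono (B : X → Set (Set X)) {A₁ A₂ : Set X} (h : A₁ ⊆ A₂) :
    Pl B A₁ ⊆ Pl B A₂ := biUnion_subset_biUnion_left h

/-- Families of at most κ many κ-small subfamilies of the pool of `A`. -/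
def SFam (B : X → Set (Set X)) (κ : Cardinal.{u}) (A : Set X) :
    Set (Set (Set (Set X))) :=
  {𝒮 | #𝒮 ≤ κ ∧ ∀ 𝒲 ∈ 𝒮, 𝒲 ⊆ Pl B A ∧ #𝒲 ≤ κ}

open Classical in
/-- Pick a point avoiding all the closures of the unions of members of `𝒮`, if possible. -/
noncomputable def pick (𝒮 : Set (Set (Set X))) : Set X :=
  if h : ((⋃ 𝒲 ∈ 𝒮, closure (⋃₀ 𝒲))ᶜ : Set X).Nonempty then {h.some} else ∅

lemma pick_card (𝒮 : Set (Set (Set X))) : #(pick 𝒮) ≤ 1 := by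
  rw [pick]
  split_ifs
  · rw [mk_singleton]
  · simp

/-- One step of the closure construction. -/
noncomputable def Fop (B : X → Set (Set X)) (κ : Cardinal.{u}) (A : Set X) : Set X :=
  A ∪ ⋃ 𝒮 ∈ SFam B κ A, pick 𝒮

/-- The transfinite closure chain, of length `κ⁺`. -/
noncomputable def chain (B : X → Set (Set X)) (κ : Cardinal.{u}) :
    (Order.succ κ).ord.ToType → Set X :=
  wellFounded_lt.fix fun i ih => Fop B κ (⋃ j : {j // j < i}, ih j j.2)

lemma chain_eq (B : X → Set (Set X)) (κ : Cardinal.{u})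
    (i : (Order.succ κ).ord.ToType) :
    chain B κ i = Fop B κ (⋃ j : {j // j < i}, chain B κ j) :=
  WellFounded.fix_eq _ _ _


lemma mem_Pl {B : X → Set (Set X)} {A : Set X} {s : Set X} :
    s ∈ Pl B A ↔ ∃ x ∈ A, s ∈ B x := by
  simp [Pl]

/-- The key construction: a dense set of size at most `μ ^ κ`. -/
lemma exists_dense (B : X → Set (Set X)) (κ μ : Cardinal.{u})
    (hκ : ℵ₀ ≤ κ) (hμ : ℵ₀ ≤ μ)
    (hB : ∀ x, IsLocalPiBase X x (B x)) (hBc : ∀ x, #(B x) ≤ μ)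
    (hcell : ∀ 𝒞 : Set (Set X), (∀ U ∈ 𝒞, IsOpen U ∧ U.Nonempty) →
      𝒞.PairwiseDisjoint id → #𝒞 ≤ κ)
    (D : Set X) (hD : Dense D) (V : X → Set (Set X))
    (hV1 : ∀ d ∈ D, ∀ Wv ∈ V d, IsOpen Wv ∧ d ∈ Wv)
    (hV2 : ∀ d ∈ D, #(V d) ≤ κ)
    (hV3 : ∀ d ∈ D, (⋂ Wv ∈ V d, closure Wv) = {d}) :
    ∃ A : Set X, #A ≤ μ ^ κ ∧ Dense A := by
  classical
  have hμ0 : μ ≠ 0 := (aleph0_pos.trans_le hμ).ne'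
  have h2 : (2 : Cardinal) ≤ μ := le_trans (le_of_lt (by exact_mod_cast nat_lt_aleph0 2)) hμ
  set lam := μ ^ κ with hlam
  have hμlam : μ ≤ lam := by
    conv_lhs => rw [← power_one μ]
    exact power_le_power_left hμ0 (le_trans (le_of_lt one_lt_aleph0) hκ)
  have hlaminf : ℵ₀ ≤ lam := hμ.trans hμlam
  have hκlam : κ ≤ lam := le_trans (cantor κ).le (power_le_power_right h2)
  have hlamκ : lam ^ κ = lam := by rw [hlam, ← power_mul, mul_eq_self hκ]
  have hbsub : ∀ {α : Type u} (s : Set α), #s ≤ lam →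
      #{t : Set α | t ⊆ s ∧ #t ≤ κ} ≤ lam := by
    intro α s hs
    refine le_trans (le_trans (mk_bounded_subset_le s κ) ?_) (le_of_eq hlamκ)
    exact power_le_power_right (max_le hs hlaminf)
  have hPlcard : ∀ A : Set X, #A ≤ lam → #(Pl B A) ≤ lam := by
    intro A hA
    refine le_trans (mk_biUnion_le B A) ?_
    have h1 : ⨆ x : A, #(B x.1) ≤ μ := ciSup_le' fun x => hBc x.1
    calc #A * ⨆ x : A, #(B x.1) ≤ lam * μ := mul_le_mul' hA h1
      _ = lam := by rw [mul_eq_max hlaminf hμ, max_eq_left hμlam]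
  have hSFamcard : ∀ A : Set X, #A ≤ lam → #(SFam B κ A) ≤ lam := by
    intro A hA
    have h1 : #({𝒲 : Set (Set X) | 𝒲 ⊆ Pl B A ∧ #𝒲 ≤ κ}) ≤ lam :=
      hbsub _ (hPlcard A hA)
    refine le_trans (mk_le_mk_of_subset ?_) (hbsub _ h1)
    rintro 𝒮 ⟨h𝒮1, h𝒮2⟩
    exact ⟨fun 𝒲 h𝒲 => h𝒮2 𝒲 h𝒲, h𝒮1⟩
  have hFopcard : ∀ A : Set X, #A ≤ lam → #(Fop B κ A) ≤ lam := by
    intro A hA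
    refine le_trans (mk_union_le _ _) ?_
    have h2' : #(⋃ 𝒮 ∈ SFam B κ A, pick 𝒮) ≤ lam := by
      refine le_trans (mk_biUnion_le _ _) ?_
      have h3 : ⨆ 𝒮 : SFam B κ A, #(pick 𝒮.1) ≤ 1 := ciSup_le' fun 𝒮 => pick_card 𝒮.1
      calc #(SFam B κ A) * ⨆ 𝒮 : SFam B κ A, #(pick 𝒮.1) ≤ lam * 1 :=
            mul_le_mul' (hSFamcard A hA) h3
        _ = lam := mul_one lam
    calc #A + #(⋃ 𝒮 ∈ SFam B κ A, pick 𝒮) ≤ lam + lam := add_le_add hA h2'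
      _ = lam := add_eq_self hlaminf
  have hchaincard : ∀ i : ((Order.succ κ).ord.ToType), #(chain B κ i) ≤ lam := by
    intro i
    refine wellFounded_lt.induction (C := fun i => #(chain B κ i) ≤ lam) i ?_
    intro j IH
    rw [chain_eq]
    apply hFopcard
    refine le_trans (mk_iUnion_le _) ?_
    have hIio : #{j' : ((Order.succ κ).ord.ToType) // j' < j} ≤ κ := Order.lt_succ_iff.1 (mk_Iio_ord_toType j)
    have hsup : ⨆ j' : {j' : ((Order.succ κ).ord.ToType) // j' < j}, #(chain B κ j'.1) ≤ lam :=
      ciSup_le' fun j' => IH j'.1 j'.2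
    calc #{j' : ((Order.succ κ).ord.ToType) // j' < j} * ⨆ j' : {j' : ((Order.succ κ).ord.ToType) // j' < j}, #(chain B κ j'.1)
        ≤ κ * lam := mul_le_mul' hIio hsup
      _ = lam := by rw [mul_eq_max hκ hlaminf, max_eq_right hκlam]
  set A : Set X := ⋃ i : ((Order.succ κ).ord.ToType), chain B κ i with hA
  have hchainsub : ∀ i : ((Order.succ κ).ord.ToType), chain B κ i ⊆ A := fun i => subset_iUnion _ i
  have hAcard : #A ≤ lam := by
    refine le_trans (mk_iUnion_le _) ?_
    have hicard : #((Order.succ κ).ord.ToType) = Order.succ κ := by rw [mk_toType, card_ord]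
    have hsup : ⨆ i : ((Order.succ κ).ord.ToType), #(chain B κ i) ≤ lam := ciSup_le' hchaincard
    have hsucclam : Order.succ κ ≤ lam :=
      Order.succ_le_of_lt ((cantor κ).trans_le (power_le_power_right h2))
    calc #((Order.succ κ).ord.ToType) * ⨆ i : ((Order.succ κ).ord.ToType), #(chain B κ i) ≤ Order.succ κ * lam := by
          rw [hicard]; exact mul_le_mul' le_rfl hsup
      _ = lam := by
          rw [mul_eq_max (hκ.trans (Order.le_succ κ)) hlaminf, max_eq_right hsucclam]
  refine ⟨A, hAcard, ?_⟩
  rw [dense_iff_inter_open]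
  intro U hU hUne
  by_contra hcon
  have hUA : U ∩ A = ∅ := not_nonempty_iff_eq_empty.1 hcon
  obtain ⟨d, hdD, hdU⟩ := hD.exists_mem_open hU hUne
  have hdA : d ∉ A := by
    intro h
    have hmem : d ∈ U ∩ A := ⟨hdU, h⟩
    rw [hUA] at hmem
    exact hmem
  have hPlopen : ∀ Bb ∈ Pl B A, IsOpen Bb ∧ Bb.Nonempty := by
    intro Bb hBb
    obtain ⟨x, _, hBbx⟩ := mem_Pl.1 hBb
    exact (hB x).1 Bb hBbx
  have hex : ∀ Vv : V d, ∃ 𝒲 : Set (Set X),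
      𝒲 ⊆ {Bb | Bb ∈ Pl B A ∧ Bb ∩ (Vv : Set X) = ∅} ∧ #𝒲 ≤ κ ∧
      ⋃₀ {Bb | Bb ∈ Pl B A ∧ Bb ∩ (Vv : Set X) = ∅} ⊆ closure (⋃₀ 𝒲) :=
    fun Vv => cell_red κ hcell _ (fun Bb hBb => (hPlopen Bb hBb.1).1)
  choose W hW1 hW2 hW3 using hex
  set 𝒮 : Set (Set (Set X)) := range W with h𝒮def
  have h𝒮card : #𝒮 ≤ κ := mk_range_le.trans (hV2 d hdD)
  have hmem : ∀ Vv : V d, ∀ Bb ∈ W Vv, ∃ i : ((Order.succ κ).ord.ToType), Bb ∈ Pl B (chain B κ i) := by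
    intro Vv Bb hBb
    have h1 : Bb ∈ Pl B A := (hW1 Vv hBb).1
    obtain ⟨x, hx, hBbx⟩ := mem_Pl.1 h1
    obtain ⟨i, hi⟩ := mem_iUnion.1 hx
    exact ⟨i, mem_Pl.2 ⟨x, hi, hBbx⟩⟩
  have hMM : #(⋃₀ 𝒮) ≤ κ := by
    refine le_trans (mk_sUnion_le 𝒮) ?_
    have h1 : ⨆ s : 𝒮, #s.1 ≤ κ := by
      refine ciSup_le' ?_
      rintro ⟨s, Vv, rfl⟩
      exact hW2 Vv
    calc #𝒮 * ⨆ s : 𝒮, #s.1 ≤ κ * κ := mul_le_mul' h𝒮card h1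
      _ = κ := mul_eq_self hκ
  have hidx : ∀ m : (⋃₀ 𝒮 : Set (Set X)), ∃ i : ((Order.succ κ).ord.ToType), (m : Set X) ∈ Pl B (chain B κ i) := by
    rintro ⟨m, hm⟩
    obtain ⟨s, hs, hms⟩ := hm
    obtain ⟨Vv, rfl⟩ := hs
    exact hmem Vv m hms
  choose g hg using hidx
  obtain ⟨i₀, hi₀⟩ : ∃ i₀ : ((Order.succ κ).ord.ToType), ∀ b ∈ range g, b < i₀ := by
    haveI hwo : IsWellOrder ((Order.succ κ).ord.ToType) (· < ·) := isWellOrder_lt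
    have h1 : #(range g) < Ordinal.cof (Ordinal.type ((· < ·) : ((Order.succ κ).ord.ToType) → ((Order.succ κ).ord.ToType) → Prop)) := by
      rw [Ordinal.type_toType, (isRegular_succ hκ).cof_eq]
      exact (mk_range_le.trans hMM).trans_lt (Order.lt_succ κ)
    by_contra hno
    push_neg at hno
    exact absurd (Order.cof_le (s := range g) hno) (by rw [← Ordinal.cof_type]; exact not_le.2 h1)
  set A₀ : Set X := ⋃ j : {j : ((Order.succ κ).ord.ToType) // j < i₀}, chain B κ j with hA₀def
  have hWsub : ∀ Vv : V d, W Vv ⊆ Pl B A₀ := by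
    intro Vv Bb hBb
    have hBb𝒮 : Bb ∈ ⋃₀ 𝒮 := ⟨W Vv, ⟨Vv, rfl⟩, hBb⟩
    have h1 := hg ⟨Bb, hBb𝒮⟩
    have h2 : g ⟨Bb, hBb𝒮⟩ < i₀ := hi₀ _ (mem_range_self _)
    refine Pl_mono B ?_ h1
    exact fun y hy => mem_iUnion.2 ⟨⟨g ⟨Bb, hBb𝒮⟩, h2⟩, hy⟩
  have h𝒮SFam : 𝒮 ∈ SFam B κ A₀ := by
    refine ⟨h𝒮card, ?_⟩
    rintro 𝒲 ⟨Vv, rfl⟩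
    exact ⟨hWsub Vv, hW2 Vv⟩
  have hdZ : d ∉ ⋃ 𝒲 ∈ 𝒮, closure (⋃₀ 𝒲) := by
    intro hd
    obtain ⟨𝒲, h𝒲, hd'⟩ := mem_iUnion₂.1 hd
    obtain ⟨Vv, rfl⟩ := h𝒲
    have hVop := hV1 d hdD Vv Vv.2
    have hdis : (Vv : Set X) ∩ ⋃₀ (W Vv) = ∅ := by
      ext z
      simp only [mem_inter_iff, mem_empty_iff_false, iff_false, not_and]
      rintro hzV ⟨Bb, hBb, hzB⟩
      have hz : z ∈ Bb ∩ (Vv : Set X) := ⟨hzB, hzV⟩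
      rw [(hW1 Vv hBb).2] at hz
      exact hz
    exact not_mem_closure_of_open_disjoint hVop.1 hVop.2 hdis hd'
  have hAZ : A ⊆ ⋃ 𝒲 ∈ 𝒮, closure (⋃₀ 𝒲) := by
    intro x hxA
    have hxd : x ≠ d := fun h => hdA (h ▸ hxA)
    obtain ⟨Vv, hVv, hxVv⟩ : ∃ Vv ∈ V d, x ∉ closure Vv := by
      by_contra hno
      push_neg at hno
      have hmem2 : x ∈ ⋂ Wv ∈ V d, closure Wv := mem_iInter₂.2 hno
      rw [hV3 d hdD] at hmem2
      exact hxd hmem2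
    have hxcl : x ∈ closure (⋃₀ {Bb | Bb ∈ Pl B A ∧ Bb ∩ Vv = ∅}) := by
      rw [mem_closure_iff]
      intro O hO hxO
      have hO' : IsOpen (O ∩ (closure Vv)ᶜ) := hO.inter isClosed_closure.isOpen_compl
      have hxO' : x ∈ O ∩ (closure Vv)ᶜ := ⟨hxO, hxVv⟩
      obtain ⟨Bb, hBb, hBbsub⟩ := (hB x).2 _ hO' hxO'
      have hBbPl : Bb ∈ Pl B A := mem_Pl.2 ⟨x, hxA, hBb⟩
      have hBbV : Bb ∩ Vv = ∅ := by
        ext z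
        simp only [mem_inter_iff, mem_empty_iff_false, iff_false, not_and]
        intro hzB hzV
        exact (hBbsub hzB).2 (subset_closure hzV)
      obtain ⟨b, hb⟩ := ((hB x).1 Bb hBb).2
      exact ⟨b, (hBbsub hb).1, Bb, ⟨hBbPl, hBbV⟩, hb⟩
    have hsub : closure (⋃₀ {Bb | Bb ∈ Pl B A ∧ Bb ∩ Vv = ∅}) ⊆
        closure (⋃₀ W ⟨Vv, hVv⟩) :=
      closure_minimal (hW3 ⟨Vv, hVv⟩) isClosed_closure
    exact mem_iUnion₂.2 ⟨W ⟨Vv, hVv⟩, ⟨⟨Vv, hVv⟩, rfl⟩, hsub hxcl⟩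
  have hZc : ((⋃ 𝒲 ∈ 𝒮, closure (⋃₀ 𝒲))ᶜ : Set X).Nonempty := ⟨d, hdZ⟩
  have hpt : hZc.some ∈ Fop B κ A₀ := by
    refine mem_union_right _ (mem_iUnion₂.2 ⟨𝒮, h𝒮SFam, ?_⟩)
    rw [pick, dif_pos hZc]
    exact rfl
  have hptA : hZc.some ∈ A := by
    have heq : Fop B κ A₀ = chain B κ i₀ := (chain_eq B κ i₀).symm
    rw [heq] at hpt
    exact hchainsub i₀ hpt
  exact hZc.some_mem (hAZ hptA)


end Stmt13Aux

open Stmt13Aux in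
/-- If `X` is Hausdorff then `|X| ≤ πχ(X)^(c(X)·dψ_c(X)·wψ_c(X))`. -/
theorem stmt_13 (X : Type u) [TopologicalSpace X] [T2Space X] :
    #X ≤ piChar X ^ (cellularity X * dPsiC X * wPsiC X) := by
  classical
  rcases isEmpty_or_nonempty X with hE | hne
  · rw [Cardinal.mk_eq_zero X]
    exact Cardinal.zero_le _
  obtain ⟨x₀⟩ := hne
  -- T2 fact: closures of all open neighborhoods intersect to the point
  have hT2 : ∀ x : X, (⋂ V ∈ {V : Set X | IsOpen V ∧ x ∈ V}, closure V) = {x} := by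
    intro x
    apply subset_antisymm
    · intro y hy
      by_contra hyx
      have hne' : y ≠ x := fun h => hyx (by rw [h]; exact rfl)
      obtain ⟨u, v, hu, hv, hyu, hxv, huv⟩ := t2_separation hne'
      have h1 : y ∈ closure v := (mem_iInter₂.1 hy) v ⟨hv, hxv⟩
      obtain ⟨z, hzu, hzv⟩ := mem_closure_iff.1 h1 u hu hyu
      exact Set.disjoint_iff.1 huv ⟨hzu, hzv⟩
    · intro y hy
      rw [mem_singleton_iff] at hy
      subst hy
      exact mem_iInter₂.2 fun V hV => subset_closure hV.2
  -- π-character facts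
  have hpix : ∀ x : X, ℵ₀ ≤ piCharPoint X x ∧
      ∃ 𝒱, IsLocalPiBase X x 𝒱 ∧ #𝒱 ≤ piCharPoint X x := by
    intro x
    have hm := csInf_mem
      (s := {κ' : Cardinal.{u} | ℵ₀ ≤ κ' ∧
        ∃ 𝒱 : Set (Set X), IsLocalPiBase X x 𝒱 ∧ #𝒱 ≤ κ'})
      ⟨max ℵ₀ #(Set X), le_max_left _ _,
        {V : Set X | IsOpen V ∧ V.Nonempty},
        ⟨fun V hV => hV, fun U hU hxU => ⟨U, ⟨hU, ⟨x, hxU⟩⟩, subset_rfl⟩⟩,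
        le_trans (mk_set_le _) (le_max_right _ _)⟩
    exact hm
  have hpile : ∀ x : X, piCharPoint X x ≤ piChar X := fun x =>
    le_ciSup (Cardinal.bddAbove_range _) x
  have hμ : ℵ₀ ≤ piChar X := (hpix x₀).1.trans (hpile x₀)
  have hBex : ∀ x : X, ∃ 𝒱, IsLocalPiBase X x 𝒱 ∧ #𝒱 ≤ piChar X := by
    intro x
    obtain ⟨_, 𝒱, h1, h2⟩ := hpix x
    exact ⟨𝒱, h1, h2.trans (hpile x)⟩
  choose B hB1 hB2 using hBex
  -- cellularity facts
  obtain ⟨hcellω, hcell⟩ : ℵ₀ ≤ cellularity X ∧ ∀ 𝒞 : Set (Set X),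
      (∀ U ∈ 𝒞, IsOpen U ∧ U.Nonempty) → 𝒞.PairwiseDisjoint id →
      #𝒞 ≤ cellularity X :=
    csInf_mem
      (s := {κ' : Cardinal.{u} | ℵ₀ ≤ κ' ∧ ∀ 𝒞 : Set (Set X),
        (∀ U ∈ 𝒞, IsOpen U ∧ U.Nonempty) → 𝒞.PairwiseDisjoint id → #𝒞 ≤ κ'})
      ⟨max ℵ₀ #(Set X), le_max_left _ _,
        fun 𝒞 _ _ => le_trans (mk_set_le _) (le_max_right _ _)⟩
  -- closed pseudocharacter at points
  have hpspt : ∀ d : X, ℵ₀ ≤ psiCPoint X d ∧ ∃ 𝒱 : Set (Set X),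
      (∀ V ∈ 𝒱, IsOpen V ∧ d ∈ V) ∧ #𝒱 ≤ psiCPoint X d ∧
      (⋂ V ∈ 𝒱, closure V) = {d} := by
    intro d
    have hm := csInf_mem
      (s := {κ' : Cardinal.{u} | ℵ₀ ≤ κ' ∧ ∃ 𝒱 : Set (Set X),
        (∀ V ∈ 𝒱, IsOpen V ∧ d ∈ V) ∧ #𝒱 ≤ κ' ∧ (⋂ V ∈ 𝒱, closure V) = {d}})
      ⟨max ℵ₀ #(Set X), le_max_left _ _,
        {V : Set X | IsOpen V ∧ d ∈ V}, fun V hV => hV,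
        le_trans (mk_set_le _) (le_max_right _ _), hT2 d⟩
    exact hm
  -- dPsiC facts
  obtain ⟨hdψω, D, hD, hDpt⟩ : ℵ₀ ≤ dPsiC X ∧ ∃ D : Set X, Dense D ∧
      ∀ d ∈ D, psiCPoint X d ≤ dPsiC X := by
    have hub : ∀ d : X, psiCPoint X d ≤ max ℵ₀ #(Set X) := by
      intro d
      exact csInf_le'
        (⟨le_max_left _ _, {V : Set X | IsOpen V ∧ d ∈ V},
          fun V hV => hV, le_trans (mk_set_le _) (le_max_right _ _), hT2 d⟩ :
          max ℵ₀ #(Set X) ∈ {κ' : Cardinal.{u} | ℵ₀ ≤ κ' ∧ ∃ 𝒱 : Set (Set X),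
            (∀ V ∈ 𝒱, IsOpen V ∧ d ∈ V) ∧ #𝒱 ≤ κ' ∧ (⋂ V ∈ 𝒱, closure V) = {d}})
    have hm := csInf_mem
      (s := {κ' : Cardinal.{u} | ℵ₀ ≤ κ' ∧ ∃ D : Set X, Dense D ∧
        ∀ d ∈ D, psiCPoint X d ≤ κ'})
      ⟨max ℵ₀ #(Set X), le_max_left _ _, univ, dense_univ, fun d _ => hub d⟩
    exact hm
  -- wPsiC facts
  have hwpt : ∀ q : X, ℵ₀ ≤ wPsiCPoint X q ∧ ∃ 𝒱 : Set (Set X),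
      (∀ V ∈ 𝒱, IsOpen V) ∧ #𝒱 ≤ wPsiCPoint X q ∧
      (⋂ V ∈ 𝒱, closure V) = {q} := by
    intro q
    have hm := csInf_mem
      (s := {κ' : Cardinal.{u} | ℵ₀ ≤ κ' ∧ ∃ 𝒱 : Set (Set X),
        (∀ V ∈ 𝒱, IsOpen V) ∧ #𝒱 ≤ κ' ∧ (⋂ V ∈ 𝒱, closure V) = {q}})
      ⟨max ℵ₀ #(Set X), le_max_left _ _,
        {V : Set X | IsOpen V ∧ q ∈ V}, fun V hV => hV.1,
        le_trans (mk_set_le _) (le_max_right _ _), hT2 q⟩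
    exact hm
  have hwle : ∀ q : X, wPsiCPoint X q ≤ wPsiC X := fun q =>
    le_ciSup (Cardinal.bddAbove_range _) q
  have hwψω : ℵ₀ ≤ wPsiC X := (hwpt x₀).1.trans (hwle x₀)
  -- the exponent κ
  set κ : Cardinal.{u} := cellularity X * dPsiC X * wPsiC X with hκdef
  have h1c : (1 : Cardinal) ≤ cellularity X := le_trans one_le_aleph0 hcellω
  have h1d : (1 : Cardinal) ≤ dPsiC X := le_trans one_le_aleph0 hdψω
  have h1w : (1 : Cardinal) ≤ wPsiC X := le_trans one_le_aleph0 hwψω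
  have hcellκ : cellularity X ≤ κ := by
    calc cellularity X = cellularity X * 1 * 1 := by rw [mul_one, mul_one]
      _ ≤ κ := mul_le_mul' (mul_le_mul' le_rfl h1d) h1w
  have hdψκ : dPsiC X ≤ κ := by
    calc dPsiC X = 1 * dPsiC X * 1 := by rw [one_mul, mul_one]
      _ ≤ κ := mul_le_mul' (mul_le_mul' h1c le_rfl) h1w
  have hwψκ : wPsiC X ≤ κ := by
    calc wPsiC X = 1 * 1 * wPsiC X := by rw [one_mul, one_mul]
      _ ≤ κ := mul_le_mul' (mul_le_mul' h1c h1d) le_rfl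
  have hκω : ℵ₀ ≤ κ := hcellω.trans hcellκ
  have hcell' : ∀ 𝒞 : Set (Set X), (∀ U ∈ 𝒞, IsOpen U ∧ U.Nonempty) →
      𝒞.PairwiseDisjoint id → #𝒞 ≤ κ := fun 𝒞 h1 h2 => (hcell 𝒞 h1 h2).trans hcellκ
  -- closed pseudobases at dense points
  have hVex : ∀ d : X, ∃ 𝒱 : Set (Set X), (∀ V ∈ 𝒱, IsOpen V ∧ d ∈ V) ∧
      #𝒱 ≤ psiCPoint X d ∧ (⋂ V ∈ 𝒱, closure V) = {d} := fun d => (hpspt d).2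
  choose Vd hVd1 hVd2 hVd3 using hVex
  -- the dense set from the transfinite construction
  obtain ⟨A, hAcard, hAdense⟩ :=
    exists_dense B κ (piChar X) hκω hμ
      hB1 hB2 hcell' D hD Vd
      (fun d _ => hVd1 d)
      (fun d hd => (hVd2 d).trans ((hDpt d hd).trans hdψκ))
      (fun d _ => hVd3 d)
  -- arithmetic
  set μ : Cardinal.{u} := piChar X with hμdef
  have hμ0 : μ ≠ 0 := (aleph0_pos.trans_le hμ).ne'
  have h2 : (2 : Cardinal) ≤ μ :=
    le_trans (le_of_lt (by exact_mod_cast nat_lt_aleph0 2)) hμ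
  set lam := μ ^ κ with hlam
  have hμlam : μ ≤ lam := by
    conv_lhs => rw [← power_one μ]
    exact power_le_power_left hμ0 (le_trans (le_of_lt one_lt_aleph0) hκω)
  have hlaminf : ℵ₀ ≤ lam := hμ.trans hμlam
  have hlamκ : lam ^ κ = lam := by rw [hlam, ← power_mul, mul_eq_self hκω]
  have hbsub : ∀ {α : Type u} (s : Set α), #s ≤ lam →
      #{t : Set α | t ⊆ s ∧ #t ≤ κ} ≤ lam := by
    intro α s hs
    refine le_trans (le_trans (mk_bounded_subset_le s κ) ?_) (le_of_eq hlamκ)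
    exact power_le_power_right (max_le hs hlaminf)
  -- the π-base pool
  have hPlcard : #(Pl B A) ≤ lam := by
    refine le_trans (mk_biUnion_le B A) ?_
    have h1 : ⨆ x : A, #(B x.1) ≤ μ := ciSup_le' fun x => hB2 x.1
    calc #A * ⨆ x : A, #(B x.1) ≤ lam * μ := mul_le_mul' hAcard h1
      _ = lam := by rw [mul_eq_max hlaminf hμ, max_eq_left hμlam]
  -- representation of closures of open sets
  have hrep : ∀ Wo : Set X, IsOpen Wo → ∃ 𝒲 : Set (Set X),
      𝒲 ⊆ Pl B A ∧ #𝒲 ≤ κ ∧ closure (⋃₀ 𝒲) = closure Wo := by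
    intro Wo hWo
    have hopens : ∀ Bb ∈ {Bb | Bb ∈ Pl B A ∧ Bb ⊆ Wo}, IsOpen Bb := by
      intro Bb hBb
      obtain ⟨x, _, hBbx⟩ := mem_Pl.1 hBb.1
      exact ((hB1 x).1 Bb hBbx).1
    obtain ⟨𝒲, h1, h2, h3⟩ := cell_red κ hcell' _ hopens
    refine ⟨𝒲, fun b hb => (h1 hb).1, h2, ?_⟩
    apply subset_antisymm
    · exact closure_mono (sUnion_subset fun b hb => (h1 hb).2)
    · refine closure_minimal ?_ isClosed_closure
      intro w hw
      have hwcl : w ∈ closure (⋃₀ {Bb | Bb ∈ Pl B A ∧ Bb ⊆ Wo}) := by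
        rw [mem_closure_iff]
        intro O hO hwO
        have hOW : IsOpen (O ∩ Wo) := hO.inter hWo
        obtain ⟨a, haA, haOW⟩ := hAdense.exists_mem_open hOW ⟨w, hwO, hw⟩
        obtain ⟨Bb, hBb, hBbsub⟩ := (hB1 a).2 _ hOW haOW
        have hBbP : Bb ∈ Pl B A := mem_Pl.2 ⟨a, haA, hBb⟩
        obtain ⟨b, hb⟩ := ((hB1 a).1 Bb hBb).2
        exact ⟨b, (hBbsub hb).1, Bb, ⟨hBbP, fun z hz => (hBbsub hz).2⟩, hb⟩
      exact closure_minimal h3 isClosed_closure hwcl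
  -- the collection of coded unions
  set TTop : Set (Set X) :=
    {G | ∃ 𝒲 : Set (Set X), 𝒲 ⊆ Pl B A ∧ #𝒲 ≤ κ ∧ G = ⋃₀ 𝒲} with hTTopdef
  have hTTopcard : #TTop ≤ lam := by
    have hsub : TTop ⊆ sUnion '' {𝒲 : Set (Set X) | 𝒲 ⊆ Pl B A ∧ #𝒲 ≤ κ} := by
      rintro G ⟨𝒲, h1, h2, rfl⟩
      exact ⟨𝒲, ⟨h1, h2⟩, rfl⟩
    exact le_trans (mk_le_mk_of_subset hsub)
      (le_trans mk_image_le (hbsub _ hPlcard))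
  -- coding function
  have hgex : ∀ Wo : Set X, ∃ G : Set X,
      IsOpen Wo → G ∈ TTop ∧ closure G = closure Wo := by
    intro Wo
    by_cases h : IsOpen Wo
    · obtain ⟨𝒲, h1, h2, h3⟩ := hrep Wo h
      exact ⟨⋃₀ 𝒲, fun _ => ⟨⟨𝒲, h1, h2, rfl⟩, h3⟩⟩
    · exact ⟨∅, fun h' => absurd h' h⟩
  choose g hg using hgex
  -- weak pseudobases
  have hWqex : ∀ q : X, ∃ 𝒱 : Set (Set X), (∀ V ∈ 𝒱, IsOpen V) ∧
      #𝒱 ≤ κ ∧ (⋂ V ∈ 𝒱, closure V) = {q} := by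
    intro q
    obtain ⟨_, 𝒱, h1, h2, h3⟩ := hwpt q
    exact ⟨𝒱, h1, h2.trans ((hwle q).trans hwψκ), h3⟩
  choose Wq hWq1 hWq2 hWq3 using hWqex
  -- the injection
  have hΦ : ∀ q : X, (⋂ G ∈ g '' Wq q, closure G) = {q} := by
    intro q
    rw [biInter_image, ← hWq3 q]
    exact iInter₂_congr fun V hV => by rw [(hg V (hWq1 q V hV)).2]
  have hΦinj : Function.Injective (fun q => g '' Wq q) := by
    intro q1 q2 h
    have h' : g '' Wq q1 = g '' Wq q2 := h
    have h1 := hΦ q1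
    rw [h', hΦ q2] at h1
    exact (singleton_eq_singleton_iff.1 h1).symm
  have hprop : ∀ q : X, g '' Wq q ⊆ TTop ∧ #(g '' Wq q) ≤ κ := by
    intro q
    constructor
    · rintro G ⟨V, hV, rfl⟩
      exact (hg V (hWq1 q V hV)).1
    · exact mk_image_le.trans (hWq2 q)
  have hXle : #X ≤ #{t : Set (Set X) // t ⊆ TTop ∧ #t ≤ κ} := by
    refine mk_le_of_injective
      (f := fun q => (⟨g '' Wq q, (hprop q).1, (hprop q).2⟩ :
        {t : Set (Set X) // t ⊆ TTop ∧ #t ≤ κ})) ?_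
    intro a b h
    exact hΦinj (congrArg Subtype.val h)
  calc #X ≤ #{t : Set (Set X) // t ⊆ TTop ∧ #t ≤ κ} := hXle
    _ ≤ lam := hbsub _ hTTopcard
    _ = μ ^ κ := rfl
end

section
/- (Sun's theorem) If X is a Hausdorff space, then |X| ≤ πχ(X)^(c(X)·ψ_c(X)). -/
open Cardinal Set TopologicalSpace

universe u

lemma sun_exists_range_eq {α K : Type u} {s : Set α} (hs : s.Nonempty) (h : #s ≤ #K) :
    ∃ f : K → α, Set.range f = s := by
  classical
  obtain ⟨emb⟩ := h
  obtain ⟨a0, ha0⟩ := hs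
  refine ⟨fun k => if h : ∃ x : s, emb x = k then (h.choose : α) else a0, ?_⟩
  apply subset_antisymm
  · rintro _ ⟨k, rfl⟩
    dsimp only
    split_ifs with h
    · exact (h.choose).2
    · exact ha0
  · intro x hx
    refine ⟨emb ⟨x, hx⟩, ?_⟩
    have h : ∃ y : s, emb y = emb ⟨x, hx⟩ := ⟨⟨x, hx⟩, rfl⟩
    simp only [dif_pos h]
    exact congrArg Subtype.val (emb.injective h.choose_spec)


lemma sun_refine {X : Type u} [TopologicalSpace X] {κ : Cardinal.{u}}
    (hcell : ∀ 𝒞 : Set (Set X), (∀ U ∈ 𝒞, IsOpen U ∧ U.Nonempty) → 𝒞.PairwiseDisjoint id →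
      #𝒞 ≤ κ)
    (𝒢 : Set (Set X)) (h𝒢 : ∀ G ∈ 𝒢, IsOpen G) :
    ∃ 𝒢' ⊆ 𝒢, #𝒢' ≤ κ ∧ ⋃₀ 𝒢 ⊆ closure (⋃₀ 𝒢') := by
  classical
  set P : Set (Set (Set X)) :=
    {𝒟 | (∀ D ∈ 𝒟, IsOpen D ∧ D.Nonempty ∧ ∃ G ∈ 𝒢, D ⊆ G) ∧ 𝒟.PairwiseDisjoint id} with hP
  obtain ⟨𝒟, h𝒟P, h𝒟max⟩ : ∃ 𝒟, Maximal (· ∈ P) 𝒟 := by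
    apply zorn_subset
    intro c hcP hchain
    refine ⟨⋃₀ c, ⟨?_, ?_⟩, fun s hs => subset_sUnion_of_mem hs⟩
    · rintro D ⟨𝒟, h𝒟c, hD⟩
      exact (hcP h𝒟c).1 D hD
    · rintro D₁ ⟨𝒟₁, h𝒟₁, hD₁⟩ D₂ ⟨𝒟₂, h𝒟₂, hD₂⟩ hne
      rcases hchain.total h𝒟₁ h𝒟₂ with h | h
      · exact (hcP h𝒟₂).2 (h hD₁) hD₂ hne
      · exact (hcP h𝒟₁).2 hD₁ (h hD₂) hne
  obtain ⟨hprops, hdisj⟩ := h𝒟P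
  choose! g hg₁ hg₂ using fun D (hD : D ∈ 𝒟) => (hprops D hD).2.2
  refine ⟨g '' 𝒟, ?_, ?_, ?_⟩
  · rintro _ ⟨D, hD, rfl⟩; exact hg₁ D hD
  · exact mk_image_le.trans (hcell 𝒟 (fun D hD => ⟨(hprops D hD).1, (hprops D hD).2.1⟩) hdisj)
  · rintro x ⟨G, hG, hxG⟩
    rw [mem_closure_iff]
    intro O hO hxO
    by_cases hmeet : ∃ D ∈ 𝒟, ((O ∩ G) ∩ D).Nonempty
    · obtain ⟨D, hD, z, hz⟩ := hmeet
      exact ⟨z, hz.1.1, mem_sUnion.2 ⟨g D, ⟨D, hD, rfl⟩, hg₂ D hD hz.2⟩⟩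
    · push_neg at hmeet
      exfalso
      have hOGne : (O ∩ G).Nonempty := ⟨x, hxO, hxG⟩
      have hOGopen : IsOpen (O ∩ G) := hO.inter (h𝒢 G hG)
      have hins : insert (O ∩ G) 𝒟 ∈ P := by
        constructor
        · rintro D (rfl | hD)
          · exact ⟨hOGopen, hOGne, G, hG, inter_subset_right⟩
          · exact hprops D hD
        · refine Set.pairwiseDisjoint_insert.2 ⟨hdisj, ?_⟩
          intro D hD _
          simp only [id]
          exact Set.disjoint_iff_inter_eq_empty.mpr (hmeet D hD)
      have hsub : insert (O ∩ G) 𝒟 ⊆ 𝒟 := h𝒟max hins (subset_insert _ _)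
      have h0 := hmeet _ (hsub (mem_insert _ _))
      rw [inter_self] at h0
      exact hOGne.ne_empty h0

lemma sun_key {X : Type u} [TopologicalSpace X] [Nonempty X] {π κ : Cardinal.{u}}
    (hπ : ℵ₀ ≤ π) (hκ : ℵ₀ ≤ κ)
    (𝒰 : X → Set (Set X))
    (h𝒰 : ∀ x, IsLocalPiBase X x (𝒰 x))
    (h𝒰card : ∀ x, #(𝒰 x) ≤ π)
    (𝒱 : X → Set (Set X))
    (h𝒱open : ∀ x, ∀ V ∈ 𝒱 x, IsOpen V ∧ x ∈ V)
    (h𝒱card : ∀ x, #(𝒱 x) ≤ κ)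
    (h𝒱int : ∀ x, (⋂ V ∈ 𝒱 x, closure V) = {x})
    (hcell : ∀ 𝒞 : Set (Set X), (∀ U ∈ 𝒞, IsOpen U ∧ U.Nonempty) → 𝒞.PairwiseDisjoint id →
      #𝒞 ≤ κ) :
    #X ≤ π ^ κ := by
  classical
  set μ : Cardinal.{u} := π ^ κ with hμ
  have hπ0 : π ≠ 0 := (aleph0_pos.trans_le hπ).ne'
  have h2π : (2 : Cardinal) ≤ π := le_trans (by exact_mod_cast (nat_lt_aleph0 2).le) hπ
  have hπμ : π ≤ μ := by
    conv_lhs => rw [← power_one π]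
    exact power_le_power_left hπ0 (one_le_aleph0.trans hκ)
  have hμinf : ℵ₀ ≤ μ := hπ.trans hπμ
  have hκμ : κ ≤ μ := ((cantor κ).trans_le (power_le_power_right h2π)).le
  have hsuccμ : Order.succ κ ≤ μ := Order.succ_le_of_lt ((cantor κ).trans_le (power_le_power_right h2π))
  have hμκpow : μ ^ κ = μ := by rw [hμ, ← power_mul, mul_eq_self hκ]
  -- index types
  set K : Type u := Quotient.out κ with hK
  set P : Type u := Quotient.out π with hPdef
  have hKcard : #K = κ := mk_out κ
  have hPcard : #P = π := mk_out π
  set Λ : Ordinal.{u} := (Order.succ κ).ord with hΛ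
  set W : Type u := Λ.ToType with hW
  have hWcard : #W = Order.succ κ := Cardinal.mk_ord_toType _
  have hΛlim : Order.IsSuccLimit Λ := Cardinal.isSuccLimit_ord (hκ.trans (Order.le_succ κ))
  have hWne : Nonempty W := Ordinal.toType_nonempty_iff_ne_zero.2 (by
    rw [hΛ, Ne, Cardinal.ord_eq_zero]
    exact (lt_of_le_of_lt (Cardinal.zero_le κ) (Order.lt_succ κ)).ne')
  obtain ⟨x₀⟩ := ‹Nonempty X›
  -- enumerations of the local π-bases
  have h𝒰ne : ∀ x, (𝒰 x).Nonempty := by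
    intro x
    obtain ⟨V, hV, -⟩ := (h𝒰 x).2 univ isOpen_univ (mem_univ x)
    exact ⟨V, hV⟩
  have : ∀ x : X, ∃ f : P → Set X, Set.range f = 𝒰 x := fun x =>
    sun_exists_range_eq (h𝒰ne x) (by rw [hPcard]; exact h𝒰card x)
  choose e he using this
  -- the machinery
  set F : (K → K → Set X) → Set X := fun d => ⋃ j, closure (⋃ i, d j i) with hF
  set r : (K → K → Set X) → X :=
    fun d => if h : F d = Set.univ then x₀ else (Set.nonempty_compl.mpr h).choose with hr'
  have hr : ∀ d, F d ≠ Set.univ → r d ∉ F d := by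
    intro d h
    have : r d = (Set.nonempty_compl.mpr h).choose := dif_neg h
    rw [this]
    exact (Set.nonempty_compl.mpr h).choose_spec
  set valid : Set X → (K → K → Set X) → Prop :=
    fun A d => ∀ j i, d j i = ∅ ∨ ∃ y ∈ A, d j i ∈ 𝒰 y with hvalid
  set step : Set X → Set X := fun A => insert x₀ A ∪ (r '' {d | valid A d}) with hstep
  have hstepsub : ∀ A, A ⊆ step A := fun A x hx => Or.inl (Set.mem_insert_of_mem _ hx)
  have hx₀step : ∀ A, x₀ ∈ step A := fun A => Or.inl (Set.mem_insert _ _)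
  -- cardinality of step
  have hstepcard : ∀ A : Set X, #A ≤ μ → #(step A) ≤ μ := by
    intro A hA
    have h1 : #(insert x₀ A : Set X) ≤ μ := by
      calc #(insert x₀ A : Set X) ≤ #A + 1 := mk_insert_le
        _ ≤ μ + μ := add_le_add hA (one_le_aleph0.trans hμinf)
        _ = μ := add_eq_self hμinf
    have h2 : #({d : K → K → Set X | valid A d}) ≤ μ := by
      have key : ∀ d : {d : K → K → Set X // valid A d}, ∀ j i,
          (if h : ∃ yp : A × P, e yp.1 yp.2 = d.1 j i then some h.choose else none :
            Option (A × P)).elim (∅ : Set X) (fun yp => e yp.1 yp.2) = d.1 j i := by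
        intro d j i
        split_ifs with h
        · exact h.choose_spec
        · rcases d.2 j i with h0 | ⟨y, hyA, hy⟩
          · exact h0.symm
          · exfalso
            rw [← he y] at hy
            obtain ⟨p, hp⟩ := hy
            exact h ⟨⟨⟨y, hyA⟩, p⟩, hp⟩
      have hinj : Function.Injective
          (fun d : {d : K → K → Set X // valid A d} => (fun j i =>
            if h : ∃ yp : A × P, e yp.1 yp.2 = d.1 j i then some h.choose else none :
            K → K → Option (A × P))) := by
        intro d d' hdd
        apply Subtype.ext
        funext j i
        have h1 := key d j i
        have h2 := key d' j i
        rw [← h1, ← h2]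
        simp only at hdd
        rw [congrFun (congrFun hdd j) i]
      have hO : #(Option (↥A × P)) ≤ μ := by
        rw [mk_option, mk_prod, lift_id, lift_id, hPcard]
        calc #↥A * π + 1 ≤ μ * μ + μ :=
              add_le_add (mul_le_mul' hA hπμ) (one_le_aleph0.trans hμinf)
          _ = μ + μ := by rw [mul_eq_self hμinf]
          _ = μ := add_eq_self hμinf
      calc #({d : K → K → Set X | valid A d}) ≤ #(K → K → Option (↥A × P)) :=
            mk_le_of_injective hinj
        _ = (#(Option (↥A × P)) ^ #K) ^ #K := by
            rw [← Cardinal.power_def, ← Cardinal.power_def]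
        _ = (#(Option (↥A × P)) ^ κ) ^ κ := by rw [hKcard]
        _ ≤ (μ ^ κ) ^ κ := power_le_power_right (power_le_power_right hO)
        _ = μ ^ (κ * κ) := (power_mul).symm
        _ = μ ^ κ := by rw [mul_eq_self hκ]
        _ = μ := hμκpow
    calc #(step A) ≤ #(insert x₀ A : Set X) + #(r '' {d | valid A d}) := mk_union_le _ _
      _ ≤ μ + μ := add_le_add h1 (mk_image_le.trans h2)
      _ = μ := add_eq_self hμinf
  -- the transfinite construction
  set Hfun : W → Set X := WellFounded.fix (C := fun _ => Set X) wellFounded_lt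
    (fun w IH => step (⋃ v : Set.Iio w, IH v v.2)) with hHfun
  have hHrec : ∀ w, Hfun w = step (⋃ v : Set.Iio w, Hfun v) :=
    fun w => WellFounded.fix_eq _ _ w
  have hHcard : ∀ w, #(Hfun w) ≤ μ := by
    intro w
    refine wellFounded_lt.induction (C := fun w => #(Hfun w) ≤ μ) w ?_
    intro w IH
    rw [hHrec w]
    apply hstepcard
    calc #(⋃ v : Set.Iio w, Hfun v) ≤ Cardinal.sum (fun v : Set.Iio w => #(Hfun v)) :=
          mk_iUnion_le_sum_mk
      _ ≤ Cardinal.sum (fun _ : Set.Iio w => μ) :=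
          Cardinal.sum_le_sum _ _ (fun v => IH v v.2)
      _ = #(Set.Iio w) * μ := sum_const' _ _
      _ ≤ μ * μ := mul_le_mul' ((mk_set_le _).trans (hWcard ▸ hsuccμ)) le_rfl
      _ = μ := mul_eq_self hμinf
  set H : Set X := ⋃ w : W, Hfun w with hH
  have hHcard' : #H ≤ μ := by
    calc #H ≤ Cardinal.sum (fun w : W => #(Hfun w)) := mk_iUnion_le_sum_mk
      _ ≤ Cardinal.sum (fun _ : W => μ) := Cardinal.sum_le_sum _ _ (fun w => hHcard w)
      _ = #W * μ := sum_const' _ _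
      _ ≤ μ * μ := mul_le_mul' (hWcard ▸ hsuccμ) le_rfl
      _ = μ := mul_eq_self hμinf
  have hx₀H : x₀ ∈ H := mem_iUnion.2 ⟨Classical.arbitrary W, (hHrec _) ▸ hx₀step _⟩
  -- the capture argument
  have hHuniv : H = Set.univ := by
    by_contra hne
    obtain ⟨q, hq⟩ := Set.nonempty_compl.mpr hne
    -- 𝒱 q is nonempty
    have h𝒱qne : (𝒱 q).Nonempty := by
      by_contra hemp
      rw [Set.not_nonempty_iff_eq_empty] at hemp
      have := h𝒱int q
      rw [hemp] at this
      simp only [Set.mem_empty_iff_false, Set.iInter_of_empty, Set.iInter_univ] at this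
      have : x₀ ∈ ({q} : Set X) := this ▸ Set.mem_univ x₀
      rw [Set.mem_singleton_iff] at this
      exact hq (this ▸ hx₀H)
    obtain ⟨v, hv⟩ := sun_exists_range_eq h𝒱qne (by rw [hKcard]; exact h𝒱card q)
    have hvopen : ∀ j, IsOpen (v j) := fun j => (h𝒱open q _ (hv ▸ Set.mem_range_self j)).1
    have hvmem : ∀ j, q ∈ v j := fun j => (h𝒱open q _ (hv ▸ Set.mem_range_self j)).2
    -- the families 𝒢 j and their refinements
    set 𝒢 : K → Set (Set X) :=
      fun j => {Wo | ∃ y ∈ H, Wo ∈ 𝒰 y ∧ Wo ⊆ (closure (v j))ᶜ} with h𝒢def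
    have h𝒢open : ∀ j, ∀ G ∈ 𝒢 j, IsOpen G := by
      rintro j G ⟨y, hy, hG, -⟩
      exact ((h𝒰 y).1 G hG).1
    have hrefine : ∀ j, ∃ 𝒢' ⊆ 𝒢 j, #𝒢' ≤ κ ∧ ⋃₀ (𝒢 j) ⊆ closure (⋃₀ 𝒢') :=
      fun j => sun_refine hcell (𝒢 j) (h𝒢open j)
    choose 𝒢' h𝒢'sub h𝒢'card h𝒢'dense using hrefine
    -- encode the refinements as a function d
    have hdex : ∀ j, ∃ f : K → Set X,
        (∀ i, f i = ∅ ∨ f i ∈ 𝒢' j) ∧ (⋃ i, f i) = ⋃₀ (𝒢' j) := by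
      intro j
      by_cases hne' : (𝒢' j).Nonempty
      · obtain ⟨f, hf⟩ := sun_exists_range_eq hne' (by rw [hKcard]; exact h𝒢'card j)
        refine ⟨f, fun i => Or.inr (hf ▸ Set.mem_range_self i), ?_⟩
        rw [← hf, Set.sUnion_range]
      · refine ⟨fun _ => ∅, fun i => Or.inl rfl, ?_⟩
        rw [Set.not_nonempty_iff_eq_empty] at hne'
        simp [hne']
    choose d hd₁ hd₂ using hdex
    -- find a stage bounding all witnesses
    have hWstage : ∀ j i : K, ∃ w : W, d j i = ∅ ∨ ∃ y ∈ Hfun w, d j i ∈ 𝒰 y := by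
      intro j i
      rcases hd₁ j i with h0 | hmem
      · exact ⟨Classical.arbitrary W, Or.inl h0⟩
      · obtain ⟨y, hyH, hy𝒰, -⟩ := h𝒢'sub j hmem
        obtain ⟨w, hw⟩ := mem_iUnion.1 hyH
        exact ⟨w, Or.inr ⟨y, hw, hy𝒰⟩⟩
    choose wf hwf using hWstage
    set iso := @Ordinal.ToType.mk Λ with hiso
    set o : K × K → Ordinal.{u} := fun p => (iso.symm (wf p.1 p.2)).1 with ho
    have holt : ∀ p, o p < Λ := fun p => (iso.symm (wf p.1 p.2)).2
    have hsup : iSup o < Λ := by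
      apply Ordinal.iSup_lt_ord _ holt
      simp only [mk_prod, lift_id, hKcard]
      rw [mul_eq_self hκ]
      have : Λ.cof = Order.succ κ := (Cardinal.isRegular_succ hκ).cof_eq
      rw [this]
      exact Order.lt_succ κ
    have hβ : iSup o + 1 < Λ := by rw [Ordinal.add_one_eq_succ]; exact hΛlim.succ_lt hsup
    set wstar : W := iso ⟨iSup o + 1, hβ⟩ with hwstar
    have hlt : ∀ j i, wf j i < wstar := by
      intro j i
      have h1 : iso.symm (wf j i) < (⟨iSup o + 1, hβ⟩ : Set.Iio Λ) := by
        change (iso.symm (wf j i)).1 < iSup o + 1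
        exact (Ordinal.le_iSup o (j, i)).trans_lt (lt_add_one _)
      have h2 := iso.lt_iff_lt.2 h1
      rwa [OrderIso.apply_symm_apply] at h2
    set A : Set X := ⋃ v : Set.Iio wstar, Hfun v with hA
    have hvalidA : valid A d := by
      intro j i
      rcases hwf j i with h0 | ⟨y, hyw, hy𝒰⟩
      · exact Or.inl h0
      · exact Or.inr ⟨y, mem_iUnion.2 ⟨⟨wf j i, hlt j i⟩, hyw⟩, hy𝒰⟩
    have hrdH : r d ∈ H := by
      refine mem_iUnion.2 ⟨wstar, ?_⟩
      rw [hHrec wstar]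
      exact Or.inr (Set.mem_image_of_mem r hvalidA)
    -- q is not in F d
    have hqF : q ∉ F d := by
      intro hqF
      obtain ⟨j, hj⟩ := mem_iUnion.1 hqF
      have hdisj : (v j) ∩ (⋃ i, d j i) = ∅ := by
        apply Set.eq_empty_iff_forall_notMem.2
        rintro z ⟨hzv, hzd⟩
        obtain ⟨i, hzi⟩ := mem_iUnion.1 hzd
        rcases hd₁ j i with h0 | hmem
        · rw [h0] at hzi; exact hzi
        · obtain ⟨-, -, -, hsub⟩ := h𝒢'sub j hmem
          exact hsub hzi (subset_closure hzv)
      obtain ⟨z, hz⟩ := (mem_closure_iff.1 hj) (v j) (hvopen j) (hvmem j)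
      exact (Set.eq_empty_iff_forall_notMem.1 hdisj) z hz
    -- H is contained in F d
    have hHF : H ⊆ F d := by
      intro y hy
      have hyq : y ≠ q := fun h => hq (h ▸ hy)
      have hj : ∃ j, y ∉ closure (v j) := by
        by_contra hall
        push_neg at hall
        have : y ∈ ⋂ V ∈ 𝒱 q, closure V := by
          apply Set.mem_biInter
          intro V hV
          rw [← hv] at hV
          obtain ⟨j, rfl⟩ := hV
          exact hall j
        rw [h𝒱int q] at this
        exact hyq this
      obtain ⟨j, hj⟩ := hj
      have hydense : y ∈ closure (⋃₀ (𝒢 j)) := by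
        rw [mem_closure_iff]
        intro O hO hyO
        have hO' : IsOpen (O ∩ (closure (v j))ᶜ) := hO.inter (isClosed_closure.isOpen_compl)
        have hyO' : y ∈ O ∩ (closure (v j))ᶜ := ⟨hyO, hj⟩
        obtain ⟨Wo, hWo𝒰, hWosub⟩ := (h𝒰 y).2 _ hO' hyO'
        obtain ⟨z, hz⟩ := ((h𝒰 y).1 Wo hWo𝒰).2
        refine ⟨z, (hWosub hz).1, ?_⟩
        exact ⟨Wo, ⟨y, hy, hWo𝒰, fun w hw => (hWosub hw).2⟩, hz⟩
      have hyd : y ∈ closure (⋃ i, d j i) := by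
        rw [hd₂ j]
        have h1 : closure (⋃₀ (𝒢 j)) ⊆ closure (⋃₀ (𝒢' j)) := by
          rw [← closure_closure (s := ⋃₀ (𝒢' j))]
          exact closure_mono (h𝒢'dense j)
        exact h1 hydense
      exact mem_iUnion.2 ⟨j, hyd⟩
    have hFne : F d ≠ Set.univ := fun h => hqF (h ▸ Set.mem_univ q)
    exact hr d hFne (hHF hrdH)
  calc #X = #(Set.univ : Set X) := mk_univ.symm
    _ = #H := by rw [hHuniv]
    _ ≤ μ := hHcard'

/-- Sun: If `X` is Hausdorff then `|X| ≤ πχ(X)^(c(X)·ψ_c(X))`. -/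
theorem stmt_14 (X : Type u) [TopologicalSpace X] [T2Space X] :
    #X ≤ piChar X ^ (cellularity X * psiC X) := by
  classical
  rcases isEmpty_or_nonempty X with hE | hNE
  · rw [Cardinal.mk_eq_zero X]
    exact Cardinal.zero_le _
  haveI : Nonempty X := hNE
  set κ₀ : Cardinal.{u} := 2 ^ #X ⊔ ℵ₀ with hκ₀
  have hsetle : ∀ S : Set (Set X), #S ≤ κ₀ := fun S =>
    (mk_set_le S).trans (le_sup_left.trans_eq' (by rw [mk_set]))
  -- cellularity facts
  have hcellmem : cellularity X ∈ {κ : Cardinal.{u} | ℵ₀ ≤ κ ∧ ∀ 𝒞 : Set (Set X),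
      (∀ U ∈ 𝒞, IsOpen U ∧ U.Nonempty) → 𝒞.PairwiseDisjoint id → #𝒞 ≤ κ} :=
    csInf_mem ⟨κ₀, le_sup_right, fun 𝒞 _ _ => hsetle 𝒞⟩
  obtain ⟨hc_inf, hc_prop⟩ := hcellmem
  -- psiC facts
  have hpsimem : psiC X ∈ {κ : Cardinal.{u} | ℵ₀ ≤ κ ∧ ∀ x : X, ∃ 𝒱 : Set (Set X),
      (∀ V ∈ 𝒱, IsOpen V ∧ x ∈ V) ∧ #𝒱 ≤ κ ∧ (⋂ V ∈ 𝒱, closure V) = {x}} := by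
    apply csInf_mem
    refine ⟨κ₀, le_sup_right, fun x => ⟨{V | IsOpen V ∧ x ∈ V}, fun V hV => hV, hsetle _, ?_⟩⟩
    apply subset_antisymm
    · intro z hz
      rw [Set.mem_singleton_iff]
      by_contra hzx
      obtain ⟨U, V, hU, hV, hxU, hzV, hUV⟩ := t2_separation (fun h : x = z => hzx h.symm)
      have hzU : z ∈ closure U := by
        have := Set.mem_iInter.1 hz U
        exact Set.mem_iInter.1 this ⟨hU, hxU⟩
      obtain ⟨w, hwV, hwU⟩ := (mem_closure_iff.1 hzU) V hV hzV
      exact Set.disjoint_left.1 hUV hwU hwV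
    · intro z hz
      rw [Set.mem_singleton_iff] at hz
      subst hz
      exact Set.mem_biInter fun V hV => subset_closure hV.2
  obtain ⟨hψ_inf, hψ_prop⟩ := hpsimem
  choose 𝒱 h𝒱a h𝒱b h𝒱c using hψ_prop
  -- piChar facts
  have hpcp : ∀ x : X, ℵ₀ ≤ piCharPoint X x ∧ ∃ 𝒰x : Set (Set X),
      IsLocalPiBase X x 𝒰x ∧ #𝒰x ≤ piCharPoint X x := by
    intro x
    have h : piCharPoint X x ∈ {κ : Cardinal.{u} | ℵ₀ ≤ κ ∧ ∃ 𝒰x : Set (Set X),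
        IsLocalPiBase X x 𝒰x ∧ #𝒰x ≤ κ} := by
      apply csInf_mem
      refine ⟨κ₀, le_sup_right, {V | IsOpen V ∧ V.Nonempty},
        ⟨fun V hV => hV, fun U hU hxU => ⟨U, ⟨hU, ⟨x, hxU⟩⟩, subset_rfl⟩⟩, hsetle _⟩
    exact ⟨h.1, h.2⟩
  have hpcp1 : ∀ x, ℵ₀ ≤ piCharPoint X x := fun x => (hpcp x).1
  choose 𝒰 h𝒰base h𝒰card using fun x => (hpcp x).2
  have hpoint_le : ∀ x : X, piCharPoint X x ≤ piChar X :=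
    fun x => le_ciSup (Cardinal.bddAbove_range _) x
  have hπinf : ℵ₀ ≤ piChar X :=
    le_trans (hpcp1 (Classical.arbitrary X)) (hpoint_le _)
  have h𝒰card' : ∀ x, #(𝒰 x) ≤ piChar X := fun x => (h𝒰card x).trans (hpoint_le x)
  -- combine
  have hψκ : psiC X ≤ cellularity X * psiC X := by
    conv_lhs => rw [← one_mul (psiC X)]
    exact mul_le_mul' (one_le_aleph0.trans hc_inf) le_rfl
  have hcκ : cellularity X ≤ cellularity X * psiC X := by
    conv_lhs => rw [← mul_one (cellularity X)]
    exact mul_le_mul' le_rfl (one_le_aleph0.trans hψ_inf)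
  exact sun_key hπinf (hc_inf.trans hcκ) 𝒰 h𝒰base h𝒰card' 𝒱 h𝒱a
    (fun x => (h𝒱b x).trans hψκ) h𝒱c (fun 𝒞 a b => (hc_prop 𝒞 a b).trans hcκ)
end

section
/- If X is a quasiregular Hausdorff space, then |X| ≤ πχ(X)^(c(X)·wψ_c(X)). -/
open Cardinal Set TopologicalSpace

universe u

/-- transfinite iteration of an operator along a well-order -/
noncomputable def ordChain (f : Set X → Set X) {T : Type u} [LinearOrder T] [WellFoundedLT T] :
    T → Set X :=
  (IsWellFounded.wf (r := ((· < ·) : T → T → Prop))).fix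
    fun i rec => f (⋃ j : Set.Iio i, rec j.1 j.2)

theorem ordChain_eq (f : Set X → Set X) {T : Type u} [LinearOrder T] [WellFoundedLT T] (i : T) :
    ordChain f i = f (⋃ j : Set.Iio i, ordChain f j.1) := by
  rw [ordChain, WellFounded.fix_eq]

theorem exists_maximal_disjoint (Q : Set (Set X)) :
    ∃ 𝒯 ⊆ Q, 𝒯.PairwiseDisjoint id ∧ ∀ B ∈ Q, (∀ t ∈ 𝒯, Disjoint B t) → B ∈ 𝒯 := by
  obtain ⟨m, hm⟩ := zorn_subset {𝒯 | 𝒯 ⊆ Q ∧ 𝒯.PairwiseDisjoint id} (fun c hc hchain => by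
    refine ⟨⋃₀ c, ⟨?_, ?_⟩, fun s hs => subset_sUnion_of_mem hs⟩
    · exact sUnion_subset fun s hs => (hc hs).1
    · intro a ha b hb hab
      obtain ⟨s, hs, has⟩ := ha
      obtain ⟨t, ht, hbt⟩ := hb
      rcases hchain.total hs ht with h | h
      · exact (hc ht).2 (h has) hbt hab
      · exact (hc hs).2 has (h hbt) hab)
  refine ⟨m, hm.prop.1, hm.prop.2, fun B hB hdisj => ?_⟩
  have : insert B m ∈ {𝒯 | 𝒯 ⊆ Q ∧ 𝒯.PairwiseDisjoint id} := by
    refine ⟨insert_subset hB hm.prop.1, hm.prop.2.insert fun t ht _ => hdisj t ht⟩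
  have := hm.2 this (subset_insert B m)
  exact this (mem_insert B m)

theorem ordChain_mono (f : Set X → Set X) (hf : ∀ A, A ⊆ f A) {T : Type u} [LinearOrder T]
    [WellFoundedLT T] {i j : T} (hij : i ≤ j) : ordChain f i ⊆ ordChain f j := by
  rcases eq_or_lt_of_le hij with rfl | hlt
  · exact subset_rfl
  · rw [ordChain_eq f j]
    exact subset_trans (subset_iUnion (fun k : Set.Iio j => ordChain f k.1) ⟨i, hlt⟩)
      (hf _)

/-- helper: bound a cardinal iSup -/
theorem ciSup_le_card {ι : Type u} (f : ι → Cardinal.{u}) (c : Cardinal.{u})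
    (h : ∀ i, f i ≤ c) : (⨆ i, f i) ≤ c := by
  rcases isEmpty_or_nonempty ι with hι | hι
  · simp [ciSup_of_empty f]
  · exact ciSup_le' h

section Spec
variable {X : Type u} [TopologicalSpace X]

theorem cellularity_spec (X : Type u) [TopologicalSpace X] :
    ℵ₀ ≤ cellularity X ∧ ∀ 𝒞 : Set (Set X),
      (∀ U ∈ 𝒞, IsOpen U ∧ U.Nonempty) → 𝒞.PairwiseDisjoint id → #𝒞 ≤ cellularity X := by
  have hne : {κ : Cardinal.{u} | ℵ₀ ≤ κ ∧ ∀ 𝒞 : Set (Set X),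
      (∀ U ∈ 𝒞, IsOpen U ∧ U.Nonempty) → 𝒞.PairwiseDisjoint id → #𝒞 ≤ κ}.Nonempty := by
    refine ⟨max ℵ₀ (2 ^ #X), le_max_left _ _, fun 𝒞 _ _ => ?_⟩
    exact le_trans (le_trans (mk_set_le 𝒞) (by rw [mk_set])) (le_max_right _ _)
  exact csInf_mem hne

theorem piChar_spec (x : X) :
    ℵ₀ ≤ piChar X ∧ ∃ 𝒱 : Set (Set X), IsLocalPiBase X x 𝒱 ∧ #𝒱 ≤ piChar X := by
  have hne : {κ : Cardinal.{u} | ℵ₀ ≤ κ ∧ ∃ 𝒱 : Set (Set X), IsLocalPiBase X x 𝒱 ∧ #𝒱 ≤ κ}.Nonempty := by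
    refine ⟨max ℵ₀ (2 ^ #X), le_max_left _ _, {V | IsOpen V ∧ V.Nonempty}, ⟨fun V hV => hV,
      fun U hU hxU => ⟨U, ⟨hU, ⟨x, hxU⟩⟩, subset_rfl⟩⟩, ?_⟩
    exact le_trans (le_trans (mk_set_le _) (by rw [mk_set])) (le_max_right _ _)
  have hmem := csInf_mem hne
  have hle : piCharPoint X x ≤ piChar X := le_ciSup (Cardinal.bddAbove_range _) x
  obtain ⟨h1, 𝒱, h𝒱, hcard⟩ := hmem
  exact ⟨le_trans h1 hle, 𝒱, h𝒱, le_trans hcard hle⟩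

theorem wPsiC_spec [T2Space X] (x : X) :
    ℵ₀ ≤ wPsiC X ∧ ∃ 𝒱 : Set (Set X), (∀ V ∈ 𝒱, IsOpen V) ∧ #𝒱 ≤ wPsiC X ∧
      (⋂ V ∈ 𝒱, closure V) = {x} := by
  have hne : {κ : Cardinal.{u} | ℵ₀ ≤ κ ∧ ∃ 𝒱 : Set (Set X),
      (∀ V ∈ 𝒱, IsOpen V) ∧ #𝒱 ≤ κ ∧ (⋂ V ∈ 𝒱, closure V) = {x}}.Nonempty := by
    refine ⟨max ℵ₀ (2 ^ #X), le_max_left _ _, {V | IsOpen V ∧ x ∈ V}, fun V hV => hV.1,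
      le_trans (le_trans (mk_set_le _) (by rw [mk_set])) (le_max_right _ _), ?_⟩
    apply Set.eq_singleton_iff_unique_mem.2
    constructor
    · exact mem_iInter₂.2 fun V hV => subset_closure hV.2
    · intro y hy
      by_contra hxy
      obtain ⟨U, W, hU, hW, hxU, hyW, hUW⟩ := t2_separation (Ne.symm hxy)
      have hyU : y ∈ closure U := mem_iInter₂.1 hy U ⟨hU, hxU⟩
      obtain ⟨z, hzW, hzU⟩ := mem_closure_iff.1 hyU W hW hyW
      exact (Set.disjoint_iff.1 hUW) ⟨hzU, hzW⟩
  have hmem := csInf_mem hne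
  have hle : wPsiCPoint X x ≤ wPsiC X := le_ciSup (Cardinal.bddAbove_range _) x
  obtain ⟨h1, 𝒱, h𝒱, hcard, hint⟩ := hmem
  exact ⟨le_trans h1 hle, 𝒱, h𝒱, le_trans hcard hle, hint⟩

end Spec
section Part1
variable {X : Type u} [TopologicalSpace X]

theorem exists_small_piBase (X : Type u) [TopologicalSpace X] [Nonempty X]
    (hX : Quasiregular X) :
    ∃ P : Set (Set X), (∀ B ∈ P, IsOpen B ∧ B.Nonempty) ∧
      (∀ U : Set X, IsOpen U → U.Nonempty → ∃ B ∈ P, B ⊆ U) ∧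
      #P ≤ piChar X ^ cellularity X := by
  classical
  obtain ⟨hκ, hcell⟩ := cellularity_spec X
  set κ := cellularity X with hκdef
  set lam := piChar X with hlamdef
  set μ := lam ^ κ with hμdef
  have hlam : ℵ₀ ≤ lam := (piChar_spec (Classical.arbitrary X)).1
  choose B hBpb hBcard using fun x : X => (piChar_spec (X := X) x).2
  have h2lam : (2 : Cardinal.{u}) ≤ lam := le_trans (by exact_mod_cast (nat_lt_aleph0 2).le) hlam
  have hlamμ : lam ≤ μ := self_le_power lam (le_trans (le_of_lt one_lt_aleph0) hκ)
  have hμ : ℵ₀ ≤ μ := hlam.trans hlamμ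
  have h2κμ : (2 : Cardinal.{u}) ^ κ ≤ μ := power_le_power_right h2lam
  have hκμ : κ ≤ μ := le_trans (le_of_lt (cantor κ)) h2κμ
  have hsuccκμ : Order.succ κ ≤ μ := le_trans (Order.succ_le_of_lt (cantor κ)) h2κμ
  -- the operator
  set Px : Set X → Set (Set X) := fun A => ⋃ x ∈ A, B x with hPxdef
  have hPx_mono : ∀ {A A' : Set X}, A ⊆ A' → Px A ⊆ Px A' :=
    fun h => biUnion_subset_biUnion_left h
  have hPx_card : ∀ A : Set X, #A ≤ μ → #(Px A) ≤ μ := by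
    intro A hA
    have he : Px A = ⋃ x : A, B x.1 := by rw [hPxdef]; exact biUnion_eq_iUnion A fun x _ => B x
    rw [he]
    refine le_trans (mk_iUnion_le _) (le_trans
      (mul_le_mul' hA (ciSup_le_card _ lam fun i => hBcard i.1)) ?_)
    exact le_of_eq (by rw [mul_comm, mul_eq_max hlam hμ, max_eq_right hlamμ])
  set pt : Set (Set X) → X := fun 𝒮 =>
    if h : (closure (⋃₀ 𝒮))ᶜ.Nonempty then h.some else Classical.arbitrary X with hptdef
  have hpt : ∀ 𝒮 : Set (Set X), closure (⋃₀ 𝒮) ≠ Set.univ → pt 𝒮 ∉ closure (⋃₀ 𝒮) := by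
    intro 𝒮 h
    have hne : (closure (⋃₀ 𝒮))ᶜ.Nonempty := by rwa [nonempty_compl]
    rw [hptdef]
    simpa only [dif_pos hne, mem_compl_iff] using hne.some_mem
  set f : Set X → Set X := fun A =>
    A ∪ pt '' {𝒮 : Set (Set X) | 𝒮 ⊆ Px A ∧ #𝒮 ≤ κ ∧ closure (⋃₀ 𝒮) ≠ Set.univ} with hfdef
  have hfA : ∀ A : Set X, A ⊆ f A := fun A => subset_union_left
  have hf_card : ∀ A : Set X, #A ≤ μ → #(f A) ≤ μ := by
    intro A hA
    refine le_trans (mk_union_le _ _) (le_trans (add_le_add hA ?_) (le_of_eq (add_eq_self hμ)))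
    refine le_trans mk_image_le ?_
    have hsub : {𝒮 : Set (Set X) | 𝒮 ⊆ Px A ∧ #𝒮 ≤ κ ∧ closure (⋃₀ 𝒮) ≠ Set.univ} ⊆
        {𝒮 : Set (Set X) | 𝒮 ⊆ Px A ∧ #𝒮 ≤ κ} := fun 𝒮 h => ⟨h.1, h.2.1⟩
    refine le_trans (mk_le_mk_of_subset hsub) ?_
    refine le_trans (mk_bounded_subset_le (Px A) κ) ?_
    have hle : (#(Px A) ⊔ ℵ₀) ≤ μ := sup_le (hPx_card A hA) hμ
    calc (#(Px A) ⊔ ℵ₀) ^ κ ≤ μ ^ κ := power_le_power_right hle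
      _ = lam ^ (κ * κ) := by rw [power_mul]
      _ = μ := by rw [mul_eq_self hκ]
  -- the chain
  set T := (Order.succ κ).ord.ToType with hTdef
  set D : T → Set X := ordChain f with hDdef
  have hD_card : ∀ i : T, #(D i) ≤ μ := by
    intro i
    induction i using ((IsWellFounded.wf (r := ((· < ·) : T → T → Prop))).induction) with
    | _ i IH =>
      rw [hDdef, ordChain_eq]
      apply hf_card
      refine le_trans (mk_iUnion_le _) ?_
      have h1 : #(Set.Iio i) ≤ κ := by
        have h2 := Cardinal.mk_Iio_ord_toType i
        exact Order.le_of_lt_succ h2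
      refine le_trans (mul_le_mul' (h1.trans hκμ) (ciSup_le_card _ μ fun j => IH j.1 j.2)) ?_
      exact le_of_eq (mul_eq_self hμ)
  set Dtot : Set X := ⋃ i : T, D i with hDtotdef
  have hDtot_card : #Dtot ≤ μ := by
    refine le_trans (mk_iUnion_le D) ?_
    have hT : #T = Order.succ κ := by rw [hTdef, mk_toType, card_ord]
    refine le_trans (mul_le_mul' (le_of_eq hT) (ciSup_le_card _ μ hD_card)) ?_
    exact le_trans (mul_le_mul' hsuccκμ le_rfl) (le_of_eq (mul_eq_self hμ))
  refine ⟨Px Dtot, ?_, ?_, hPx_card Dtot hDtot_card⟩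
  · intro B' hB'
    obtain ⟨x, _, hBx⟩ := mem_iUnion₂.1 hB'
    exact (hBpb x).1 B' hBx
  · -- density
    intro U hU hUne
    by_contra hcon
    push_neg at hcon
    have hDU : Dtot ∩ U = ∅ := by
      by_contra hne
      obtain ⟨x, hxD, hxU⟩ := nonempty_iff_ne_empty.2 hne
      obtain ⟨B', hB'x, hB'U⟩ := (hBpb x).2 U hU hxU
      exact hcon B' (mem_biUnion hxD hB'x) hB'U
    obtain ⟨G, hGopen, hGne, hGcl⟩ := hX U hU hUne
    set Q : Set (Set X) := {B' ∈ Px Dtot | B' ⊆ (closure G)ᶜ} with hQdef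
    obtain ⟨𝒯, h𝒯Q, h𝒯disj, h𝒯max⟩ := exists_maximal_disjoint Q
    have h𝒯P : 𝒯 ⊆ Px Dtot := fun t ht => (h𝒯Q ht).1
    have h𝒯card : #𝒯 ≤ κ := by
      refine hcell 𝒯 (fun t ht => ?_) h𝒯disj
      obtain ⟨x, _, hBx⟩ := mem_iUnion₂.1 (h𝒯P ht)
      exact (hBpb x).1 t hBx
    have h𝒯compl : ⋃₀ 𝒯 ⊆ (closure G)ᶜ := sUnion_subset fun t ht => (h𝒯Q ht).2
    have hclne : closure (⋃₀ 𝒯) ≠ Set.univ := by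
      obtain ⟨g, hg⟩ := hGne
      intro heq
      have hg1 : g ∈ interior (closure G) := interior_maximal subset_closure hGopen hg
      have hg2 : g ∈ closure (⋃₀ 𝒯) := heq ▸ mem_univ g
      have : closure (⋃₀ 𝒯) ⊆ (interior (closure G))ᶜ := by
        rw [← closure_compl]
        exact closure_mono h𝒯compl
      exact this hg2 hg1
    -- find a stage past 𝒯
    have hidx : ∀ t : 𝒯, ∃ i : T, (t : Set X) ∈ Px (D i) := by
      rintro ⟨t, ht⟩
      obtain ⟨x, hxD, hBx⟩ := mem_iUnion₂.1 (h𝒯P ht)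
      obtain ⟨i, hi⟩ := mem_iUnion.1 hxD
      exact ⟨i, mem_biUnion hi hBx⟩
    choose idx hidx' using hidx
    haveI : IsWellOrder T ((· < ·) : T → T → Prop) :=
      isWellOrder_lt
    have hSbd : Bounded ((· < ·) : T → T → Prop) (range idx) := by
      have hnc : ¬ IsCofinal (range idx) := fun hc => by
        have h : Order.cof (Order.succ κ).ord.ToType ≤ #(range idx) := Order.cof_le hc
        rw [Ordinal.cof_toType, (isRegular_succ hκ).cof_ord] at h
        exact absurd (lt_of_le_of_lt (mk_range_le.trans h𝒯card) (Order.lt_succ κ)) (not_lt.2 h)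
      obtain ⟨a, ha⟩ := not_isCofinal_iff.1 hnc
      exact ⟨a, ha⟩
    obtain ⟨i₀, hi₀⟩ := hSbd
    set A : Set X := ⋃ j : Set.Iio i₀, D j.1 with hAdef
    have h𝒯A : 𝒯 ⊆ Px A := by
      intro t ht
      refine hPx_mono ?_ (hidx' ⟨t, ht⟩)
      intro y hy
      exact mem_iUnion.2 ⟨⟨idx ⟨t, ht⟩, hi₀ _ (mem_range_self _)⟩, hy⟩
    have hpt𝒯 : pt 𝒯 ∈ D i₀ := by
      rw [hDdef, ordChain_eq]
      exact subset_union_right (mem_image_of_mem pt ⟨h𝒯A, h𝒯card, hclne⟩)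
    have hxDtot : pt 𝒯 ∈ Dtot := mem_iUnion.2 ⟨i₀, hpt𝒯⟩
    set x := pt 𝒯 with hxdef
    have hx1 : x ∉ closure (⋃₀ 𝒯) := hpt 𝒯 hclne
    have hxG : x ∉ closure G := by
      intro hmem
      have : x ∈ Dtot ∩ U := ⟨hxDtot, hGcl hmem⟩
      rw [hDU] at this
      exact this
    set W : Set X := (closure (⋃₀ 𝒯))ᶜ ∩ (closure G)ᶜ with hWdef
    have hWopen : IsOpen W := (isClosed_closure.isOpen_compl).inter isClosed_closure.isOpen_compl
    have hxW : x ∈ W := ⟨hx1, hxG⟩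
    obtain ⟨B', hB'x, hB'W⟩ := (hBpb x).2 W hWopen hxW
    have hB'P : B' ∈ Px Dtot := mem_biUnion hxDtot hB'x
    have hB'Q : B' ∈ Q := ⟨hB'P, fun y hy => (hB'W hy).2⟩
    have hB'disj : ∀ t ∈ 𝒯, Disjoint B' t := by
      intro t ht
      rw [Set.disjoint_left]
      intro a haB hat
      exact (hB'W haB).1 (subset_closure (mem_sUnion_of_mem hat ht))
    have hB'𝒯 : B' ∈ 𝒯 := h𝒯max B' hB'Q hB'disj
    obtain ⟨b, hb⟩ := ((hBpb x).1 B' hB'x).2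
    exact (hB'W hb).1 (subset_closure (mem_sUnion_of_mem hb hB'𝒯))

end Part1

section Part2

theorem card_le_of_piBase (X : Type u) [TopologicalSpace X] [T2Space X] [Nonempty X]
    (P : Set (Set X)) (hPmem : ∀ B ∈ P, IsOpen B ∧ B.Nonempty)
    (hPbase : ∀ U : Set X, IsOpen U → U.Nonempty → ∃ B ∈ P, B ⊆ U) :
    #X ≤ (#P ⊔ ℵ₀) ^ (cellularity X * wPsiC X) := by
  classical
  obtain ⟨hκ, hcell⟩ := cellularity_spec X
  set κ := cellularity X with hκdef
  set ν := wPsiC X with hνdef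
  set p := (#P ⊔ ℵ₀) with hpdef
  have hp : ℵ₀ ≤ p := le_sup_right
  choose V hVopen hVcard hVint using fun x : X => (wPsiC_spec (X := X) x).2
  have hms : ∀ W : Set X, ∃ 𝒯 ⊆ {B ∈ P | B ⊆ W}, 𝒯.PairwiseDisjoint id ∧
      ∀ B ∈ {B ∈ P | B ⊆ W}, (∀ t ∈ 𝒯, Disjoint B t) → B ∈ 𝒯 :=
    fun W => exists_maximal_disjoint _
  choose 𝒯 h𝒯sub h𝒯disj h𝒯max using hms
  have hclosure : ∀ W : Set X, IsOpen W → closure (⋃₀ 𝒯 W) = closure W := by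
    intro W hW
    apply subset_antisymm
    · exact closure_mono (sUnion_subset fun t ht => (h𝒯sub W ht).2)
    · rw [← closure_closure (s := ⋃₀ 𝒯 W)]
      apply closure_mono
      intro z hz
      by_contra hzc
      have hop : IsOpen (W ∩ (closure (⋃₀ 𝒯 W))ᶜ) := hW.inter isClosed_closure.isOpen_compl
      obtain ⟨B, hBP, hBsub⟩ := hPbase _ hop ⟨z, hz, hzc⟩
      have hBQ : B ∈ {B ∈ P | B ⊆ W} := ⟨hBP, fun y hy => (hBsub hy).1⟩
      have hdisj : ∀ t ∈ 𝒯 W, Disjoint B t := by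
        intro t ht
        rw [Set.disjoint_left]
        intro a haB hat
        exact (hBsub haB).2 (subset_closure (mem_sUnion_of_mem hat ht))
      have hB𝒯 := h𝒯max W B hBQ hdisj
      obtain ⟨b, hb⟩ := (hPmem B hBP).2
      exact (hBsub hb).2 (subset_closure (mem_sUnion_of_mem hb hB𝒯))
  have h𝒯card : ∀ W : Set X, #(𝒯 W) ≤ κ :=
    fun W => hcell _ (fun t ht => hPmem t (h𝒯sub W ht).1) (h𝒯disj W)
  set R : Set (Set (Set X)) := {S | S ⊆ P ∧ #S ≤ κ} with hRdef
  set 𝔗 : Set (Set (Set (Set X))) := {C | C ⊆ R ∧ #C ≤ ν} with h𝔗def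
  set Φ : X → Set (Set (Set X)) := fun x => 𝒯 '' (V x) with hΦdef
  have hΦmem : ∀ x : X, Φ x ∈ 𝔗 := by
    intro x
    refine ⟨?_, le_trans mk_image_le (hVcard x)⟩
    rintro S ⟨W, hW, rfl⟩
    exact ⟨fun t ht => (h𝒯sub W ht).1, h𝒯card W⟩
  have hΦrec : ∀ x : X, (⋂ S ∈ Φ x, closure (⋃₀ S)) = {x} := by
    intro x
    rw [hΦdef]
    simp only [biInter_image]
    rw [← hVint x]
    exact iInter₂_congr fun W hW => hclosure W (hVopen x W hW)
  have hΦinj : Function.Injective Φ := by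
    intro x y hxy
    have h := (hΦrec x).symm.trans (by rw [hxy, hΦrec y] :
      (⋂ S ∈ Φ x, closure (⋃₀ S)) = {y})
    exact singleton_eq_singleton_iff.1 h
  have hinj : Function.Injective (fun x : X => (⟨Φ x, hΦmem x⟩ : 𝔗)) := by
    intro x y hxy
    exact hΦinj (congrArg Subtype.val hxy)
  refine le_trans (mk_le_of_injective hinj) ?_
  have hR : #R ≤ p ^ κ := le_trans (mk_bounded_subset_le P κ) (power_le_power_right le_rfl)
  have hpκ : ℵ₀ ≤ p ^ κ :=
    le_trans hp (self_le_power p (le_trans (le_of_lt one_lt_aleph0) hκ))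
  have h𝔗card : #𝔗 ≤ (p ^ κ) ^ ν :=
    le_trans (mk_bounded_subset_le R ν) (power_le_power_right (sup_le hR hpκ))
  refine le_trans h𝔗card (le_of_eq ?_)
  rw [← power_mul]

end Part2

/-- If `X` is quasiregular and Hausdorff then `|X| ≤ πχ(X)^(c(X)·wψ_c(X))`. -/
theorem stmt_15 (X : Type u) [TopologicalSpace X] [T2Space X] (hX : Quasiregular X) :
    #X ≤ piChar X ^ (cellularity X * wPsiC X) := by
  rcases isEmpty_or_nonempty X with h | h
  · exact le_trans (le_of_eq (mk_eq_zero X)) zero_le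
  · obtain ⟨hκ, -⟩ := cellularity_spec X
    have hlam : ℵ₀ ≤ piChar X := (piChar_spec (Classical.arbitrary X)).1
    obtain ⟨P, hPmem, hPbase, hPcard⟩ := exists_small_piBase X hX
    refine le_trans (card_le_of_piBase X P hPmem hPbase) ?_
    have hbase : (#P ⊔ ℵ₀) ≤ piChar X ^ cellularity X :=
      sup_le hPcard (le_trans hlam
        (self_le_power _ (le_trans (le_of_lt one_lt_aleph0) hκ)))
    calc (#P ⊔ ℵ₀) ^ (cellularity X * wPsiC X)
        ≤ (piChar X ^ cellularity X) ^ (cellularity X * wPsiC X) :=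
          power_le_power_right hbase
      _ = piChar X ^ (cellularity X * (cellularity X * wPsiC X)) := (power_mul).symm
      _ = piChar X ^ (cellularity X * wPsiC X) := by
          rw [← mul_assoc, mul_eq_self hκ]
end

section
/- If X is a Hausdorff space, then nq(X) ≤ L(X). -/
open Cardinal Set TopologicalSpace

universe u

/-- If `X` is Hausdorff then `nq(X) ≤ L(X)`. -/
theorem stmt_17 (X : Type u) [TopologicalSpace X] [T2Space X] :
    nq X ≤ lindelofDegree X := by
  set κ := lindelofDegree X with hκ
  have hne : {κ : Cardinal.{u} | ℵ₀ ≤ κ ∧ ∀ 𝒰 : Set (Set X), (∀ U ∈ 𝒰, IsOpen U) →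
      ⋃₀ 𝒰 = Set.univ → ∃ 𝒱 ⊆ 𝒰, #𝒱 ≤ κ ∧ ⋃₀ 𝒱 = Set.univ}.Nonempty := by
    refine ⟨ℵ₀ ⊔ #(Set X), le_sup_left, fun 𝒰 _ hcov => ⟨𝒰, subset_rfl, ?_, hcov⟩⟩
    exact le_trans (Cardinal.mk_set_le 𝒰) le_sup_right
  have hmem := csInf_mem hne
  obtain ⟨hκinf, hL⟩ := hmem
  refine csInf_le' ⟨hκinf, fun U hU hUne => ?_⟩
  obtain ⟨x, hxU⟩ := hUne
  have hsep : ∀ y : X, y ∉ U → ∃ V W : Set X,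
      IsOpen V ∧ IsOpen W ∧ x ∈ V ∧ y ∈ W ∧ Disjoint V W := by
    intro y hy
    have hxy : x ≠ y := fun h => hy (h ▸ hxU)
    obtain ⟨V, W, hVo, hWo, hxV, hyW, hd⟩ := t2_separation hxy
    exact ⟨V, W, hVo, hWo, hxV, hyW, hd⟩
  choose! V W hVo hWo hxV hyW hd using hsep
  set 𝒰 : Set (Set X) := insert U (W '' {y | y ∉ U}) with h𝒰
  have hcov : ⋃₀ 𝒰 = Set.univ := by
    ext z
    simp only [mem_sUnion, mem_univ, iff_true]
    by_cases hz : z ∈ U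
    · exact ⟨U, mem_insert _ _, hz⟩
    · exact ⟨W z, mem_insert_of_mem _ ⟨z, hz, rfl⟩, hyW z hz⟩
  have hopen : ∀ A ∈ 𝒰, IsOpen A := by
    rintro A (rfl | ⟨y, hy, rfl⟩)
    · exact hU
    · exact hWo y hy
  obtain ⟨𝒱', h𝒱'sub, h𝒱'card, h𝒱'cov⟩ := hL 𝒰 hopen hcov
  classical
  set f : Set X → Set X := fun A =>
    if h : ∃ y, y ∉ U ∧ W y = A then V h.choose else Set.univ with hf
  refine ⟨f '' 𝒱', ?_, ?_, ⟨x, ?_⟩, ?_⟩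
  · rintro _ ⟨A, _, rfl⟩
    simp only [hf]
    split_ifs with h
    · exact hVo _ h.choose_spec.1
    · exact isOpen_univ
  · exact le_trans (Cardinal.mk_image_le) h𝒱'card
  · rintro _ ⟨A, _, rfl⟩
    simp only [hf]
    split_ifs with h
    · exact hxV _ h.choose_spec.1
    · exact mem_univ x
  · intro z hz
    by_contra hzU
    have : z ∈ ⋃₀ 𝒱' := h𝒱'cov ▸ mem_univ z
    obtain ⟨A, hA𝒱', hzA⟩ := this
    rcases h𝒱'sub hA𝒱' with rfl | ⟨y, hy, rfl⟩
    · exact hzU hzA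
    · have hex : ∃ y', y' ∉ U ∧ W y' = W y := ⟨y, hy, rfl⟩
      set y₀ := hex.choose with hy₀
      obtain ⟨hy₀U, hWy₀⟩ := hex.choose_spec
      have hfmem : f (W y) ∈ f '' 𝒱' := mem_image_of_mem f hA𝒱'
      have hfeq : f (W y) = V y₀ := by simp only [hf, dif_pos hex]; rfl
      have hzcl : z ∈ closure (V y₀) := by
        have := mem_iInter₂.mp hz (f (W y)) hfmem
        rwa [hfeq] at this
      have hsub : closure (V y₀) ⊆ (W y₀)ᶜ :=
        closure_minimal ((hd y₀ hy₀U).subset_compl_right)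
          (hWo y₀ hy₀U).isClosed_compl
      exact hsub hzcl (hWy₀ ▸ hzA)
end
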